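/- arXiv:0905.3790 — 6 statements merged into one kernel-verified Lean document; each statement's English description precedes it below -/
import Mathlib

section
/- A finite p-group G has element breadth 1 (i.e., every non-central element has exactly p conjugates, and some element is non-central) if and only if the derived subgroup G' has order p. -/
open Subgroup
open scoped commutatorElement


section Helpers
variable {G : Type*} [Group G]

private lemma comm_conj' (h a b : G) : h * ⁅a, b⁆ * h⁻¹ = ⁅h * a * h⁻¹, h * b * h⁻¹⁆ := by
  group

private lemma comm_mul_right' (a b c : G) : ⁅a, b * c⁆ = ⁅a, b⁆ * (b * ⁅a, c⁆ * b⁻¹) := by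
  group

private lemma comm_mul_cancel {u c : G} (hc : u * c = c * u) (w : G) : ⁅u, w * c⁆ = ⁅u, w⁆ := by
  have h1 : ⁅u, c⁆ = 1 := commutatorElement_eq_one_iff_commute.mpr hc
  rw [comm_mul_right', h1]
  group

private lemma card_comm_range [Finite G] (u : G) :
    Nat.card (Set.range fun w : G => ⁅u, w⁆) = (Subgroup.centralizer {u} : Subgroup G).index := by
  have hwd : ∀ a b : G, QuotientGroup.leftRel (Subgroup.centralizer ({u} : Set G)) a b → ⁅u, a⁆ = ⁅u, b⁆ := by
    intro a b hab
    rw [QuotientGroup.leftRel_apply] at hab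
    have hc : u * (a⁻¹ * b) = (a⁻¹ * b) * u := (Subgroup.mem_centralizer_singleton_iff.mp hab).symm
    have h2 := comm_mul_cancel hc a
    rw [← h2]
    congr 1
    group
  let F : G ⧸ Subgroup.centralizer ({u} : Set G) → G := Quotient.lift (fun w => ⁅u, w⁆) hwd
  have hFinj : Function.Injective F := by
    intro q1 q2
    induction q1 using Quotient.inductionOn
    induction q2 using Quotient.inductionOn
    rename_i a b
    intro h
    have h0 : ⁅u, a⁆ = ⁅u, b⁆ := h
    apply Quotient.sound
    rw [commutatorElement_def, commutatorElement_def] at h0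
    have h' : a * u⁻¹ * a⁻¹ = b * u⁻¹ * b⁻¹ := by
      have := congrArg (fun z => u⁻¹ * z) h0
      simpa [mul_assoc] using this
    have h'' : a * u * a⁻¹ = b * u * b⁻¹ := by
      have := congrArg Inv.inv h'
      simpa [mul_assoc] using this
    show QuotientGroup.leftRel (Subgroup.centralizer ({u} : Set G)) a b
    rw [QuotientGroup.leftRel_apply]
    apply Subgroup.mem_centralizer_singleton_iff.mpr
    calc (a⁻¹ * b) * u = a⁻¹ * b * u := by group
      _ = a⁻¹ * (b * u * b⁻¹) * b := by group
      _ = a⁻¹ * (a * u * a⁻¹) * b := by rw [h'']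
      _ = u * (a⁻¹ * b) := by group
  have hrange : Set.range (fun w : G => ⁅u, w⁆) = Set.range F := by
    ext z
    constructor
    · rintro ⟨w, hw⟩
      exact ⟨Quotient.mk _ w, hw⟩
    · rintro ⟨q, hq⟩
      induction q using Quotient.inductionOn
      rename_i w
      exact ⟨w, hq⟩
  rw [hrange, Nat.card_range_of_injective hFinj, Subgroup.index_eq_card]

end Helpers


section Struct
variable {G : Type*} [Group G] [Finite G] {p : ℕ}

private lemma subgroup_eq_of_index_p (hp : p.Prime) {H K : Subgroup G} (hHK : H ≤ K)
    (hH : H.index = p) (hK : K.index = p) : H = K := by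
  apply Subgroup.eq_of_le_of_card_ge hHK
  have h1 : Nat.card K * K.index = Nat.card G := K.card_mul_index
  have h2 : Nat.card H * H.index = Nat.card G := H.card_mul_index
  rw [hH] at h2; rw [hK] at h1
  have := Nat.eq_of_mul_eq_mul_right hp.pos (h1.trans h2.symm)
  omega

private lemma normal_of_index_p (hp : p.Prime) (hG : IsPGroup p G) (H : Subgroup G)
    (h : H.index = p) : H.Normal := by
  have : Fact p.Prime := ⟨hp⟩
  have hnil : Group.IsNilpotent G := hG.isNilpotent
  have hnc : NormalizerCondition G := normalizerCondition_of_isNilpotent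
  have hne : H ≠ ⊤ := by
    intro ht
    rw [ht, Subgroup.index_top] at h
    exact hp.one_lt.ne h
  have hcoatom : IsCoatom H := by
    constructor
    · exact hne
    · intro K hK
      have hdvd : K.index ∣ H.index := Subgroup.index_dvd_of_le hK.le
      rw [h] at hdvd
      rcases (Nat.Prime.eq_one_or_self_of_dvd hp _ hdvd) with h1 | h1
      · exact Subgroup.index_eq_one.mp h1
      · exact absurd (subgroup_eq_of_index_p hp hK.le h h1) hK.ne
  exact Subgroup.NormalizerCondition.normal_of_coatom H hnc hcoatom

private lemma le_center_of_card_p (hp : p.Prime) (hG : IsPGroup p G) (N : Subgroup G)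
    [hN : N.Normal] (hcard : Nat.card N = p) : N ≤ Subgroup.center G := by
  have : Fact p.Prime := ⟨hp⟩
  -- conjugation action of ConjAct G on N
  have hGc : IsPGroup p (ConjAct G) := hG.of_equiv ConjAct.toConjAct
  have hfix : (1 : N) ∈ MulAction.fixedPoints (ConjAct G) N := by
    intro g
    simp
  obtain ⟨b, hb, hb1⟩ := hGc.exists_fixed_point_of_prime_dvd_card_of_fixed_point (α := N)
    (by rw [hcard]) hfix
  have hbc : (b : G) ∈ Subgroup.center G := by
    rw [Subgroup.mem_center_iff]
    intro g
    have := hb (ConjAct.toConjAct g)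
    have h2 : (ConjAct.toConjAct g) • (b : G) = (b : G) := by
      rw [← ConjAct.Subgroup.val_conj_smul, this]
    rw [ConjAct.toConjAct_smul] at h2
    calc g * b = (g * b * g⁻¹) * g := by group
      _ = b * g := by rw [h2]
  have hbne : (b : G) ≠ 1 := by
    intro hb0
    exact hb1 (Subtype.ext hb0).symm
  have hz : Subgroup.zpowers (b : G) ≤ N := by
    rw [Subgroup.zpowers_le]
    exact b.2
  have ho : orderOf (b : G) = p := by
    have hdvd : orderOf (b : G) ∣ p := by
      rw [← hcard]
      exact N.orderOf_dvd_natCard b.2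
    rcases (Nat.Prime.eq_one_or_self_of_dvd hp _ hdvd) with h1 | h1
    · exact absurd (orderOf_eq_one_iff.mp h1) hbne
    · exact h1
  have heq : Subgroup.zpowers (b : G) = N := by
    apply Subgroup.eq_of_le_of_card_ge hz
    rw [hcard, Nat.card_zpowers, ho]
  have hle : Subgroup.zpowers (b : G) ≤ Subgroup.center G := Subgroup.zpowers_le.mpr hbc
  rwa [heq] at hle

private lemma zpowers_eq_of_prime_card (hp : p.Prime) {K : Subgroup G}
    (hK : Nat.card K = p) {t : G} (ht : t ≠ 1) (h1 : t ∈ K) :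
    Subgroup.zpowers t = K := by
  have ho : orderOf t = p := by
    have hdvd : orderOf t ∣ p := by rw [← hK]; exact K.orderOf_dvd_natCard h1
    rcases (Nat.Prime.eq_one_or_self_of_dvd hp _ hdvd) with h | h
    · exact absurd (orderOf_eq_one_iff.mp h) ht
    · exact h
  apply Subgroup.eq_of_le_of_card_ge (Subgroup.zpowers_le.mpr h1)
  rw [hK, Nat.card_zpowers, ho]

private lemma eq_of_prime_card_mem (hp : p.Prime) {K K' : Subgroup G}
    (hK : Nat.card K = p) (hK' : Nat.card K' = p) {t : G} (ht : t ≠ 1)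
    (h1 : t ∈ K) (h2 : t ∈ K') : K = K' := by
  rw [← zpowers_eq_of_prime_card hp hK ht h1, ← zpowers_eq_of_prime_card hp hK' ht h2]

end Struct

section Main
variable {G : Type*} [Group G] [Finite G] {p : ℕ}

private lemma exists_K (hp : p.Prime) (hG : IsPGroup p G)
    (hb : ∀ x : G, x ∉ Subgroup.center G → (Subgroup.centralizer {x}).index = p)
    (x : G) (hx : x ∉ Subgroup.center G) :
    ∃ K : Subgroup G, Nat.card K = p ∧ ∀ w : G, ⁅x, w⁆ ∈ K := by
  -- find g not commuting with x
  have hx' := hx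
  rw [Subgroup.mem_center_iff] at hx'
  push_neg at hx'
  obtain ⟨g, hgx⟩ := hx'
  have hg_notin : g ∉ Subgroup.centralizer ({x} : Set G) := by
    rw [Subgroup.mem_centralizer_singleton_iff]
    exact hgx
  have hg_nc : g ∉ Subgroup.center G := fun h => hg_notin (Subgroup.center_le_centralizer {x} h)
  have hCx : (Subgroup.centralizer ({x} : Set G)).index = p := hb x hx
  have hCg : (Subgroup.centralizer ({g} : Set G)).index = p := hb g hg_nc
  haveI hCxN : (Subgroup.centralizer ({x} : Set G)).Normal := normal_of_index_p hp hG _ hCx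
  set A := Subgroup.normalClosure ({x} : Set G) with hA
  have hxA : x ∈ A := Subgroup.subset_normalClosure rfl
  have hA_le : A ≤ Subgroup.centralizer ({x} : Set G) :=
    Subgroup.normalClosure_le_normal
      (by simp [Subgroup.mem_centralizer_singleton_iff])
  -- every conjugate of x commutes with every element of A
  have hconjA : ∀ a ∈ A, ∀ w : G, Commute a (w * x * w⁻¹) := by
    intro a ha w
    have h1 : w⁻¹ * a * (w⁻¹)⁻¹ ∈ A := Subgroup.Normal.conj_mem inferInstance a ha w⁻¹
    rw [inv_inv] at h1
    have h2 : Commute (w⁻¹ * a * w) x :=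
      Subgroup.mem_centralizer_singleton_iff.mp (hA_le h1)
    have h3 := h2.map (MulAut.conj w).toMonoidHom
    simp only [MulEquiv.coe_toMonoidHom, MulAut.conj_apply] at h3
    have h4 : w * (w⁻¹ * a * w) * w⁻¹ = a := by group
    rw [h4] at h3
    exact h3
  -- elements of A pairwise commute
  have hAcomm : ∀ a ∈ A, ∀ b ∈ A, Commute a b := by
    intro a ha b hb
    have hgen : Group.conjugatesOfSet ({x} : Set G) ⊆ (Subgroup.centralizer ({a} : Set G) : Set G) := by
      intro y hy
      rw [Group.mem_conjugatesOfSet_iff] at hy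
      obtain ⟨z, hz, hconj⟩ := hy
      rw [Set.mem_singleton_iff] at hz
      subst hz
      obtain ⟨c, hc⟩ := isConj_iff.mp hconj
      rw [SetLike.mem_coe, Subgroup.mem_centralizer_singleton_iff]
      rw [← hc]
      exact (hconjA a ha c).symm.eq
    have hle2 : A ≤ Subgroup.centralizer ({a} : Set G) := by
      rw [hA]
      show Subgroup.closure (Group.conjugatesOfSet ({x} : Set G)) ≤ _
      exact (Subgroup.closure_le _).mpr hgen
    have := Subgroup.mem_centralizer_singleton_iff.mp (hle2 hb)
    exact this.symm
  -- commutators with g of elements of A stay in A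
  have hcommA : ∀ a ∈ A, ⁅a, g⁆ ∈ A := by
    intro a ha
    have h1 : ⁅a, g⁆ = a * (g * a⁻¹ * g⁻¹) := by group
    rw [h1]
    exact mul_mem ha (Subgroup.Normal.conj_mem inferInstance a⁻¹ (inv_mem ha) g)
  -- multiplicativity of a ↦ ⁅a, g⁆ on A
  have hmul : ∀ a ∈ A, ∀ b ∈ A, ⁅a, g⁆ * ⁅b, g⁆ = ⁅a * b, g⁆ := by
    intro a ha b hb
    have hid : ⁅a * b, g⁆ = a * ⁅b, g⁆ * a⁻¹ * ⁅a, g⁆ := by group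
    have hc1 : Commute a ⁅b, g⁆ := hAcomm a ha _ (hcommA b hb)
    have h2 : a * ⁅b, g⁆ * a⁻¹ = ⁅b, g⁆ := by rw [hc1.eq]; group
    rw [hid, h2]
    exact (hAcomm _ (hcommA a ha) _ (hcommA b hb)).eq
  -- the subgroup K
  let K : Subgroup G :=
    { carrier := (fun a => ⁅a, g⁆) '' (A : Set G)
      one_mem' := ⟨1, A.one_mem, by group⟩
      mul_mem' := by
        rintro z1 z2 ⟨a, ha, rfl⟩ ⟨b, hb, rfl⟩
        exact ⟨a * b, mul_mem ha hb, (hmul a ha b hb).symm⟩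
      inv_mem' := by
        rintro z ⟨a, ha, rfl⟩
        refine ⟨a⁻¹, inv_mem ha, ?_⟩
        show ⁅a⁻¹, g⁆ = ⁅a, g⁆⁻¹
        have h1 : ⁅a⁻¹, g⁆ * ⁅a, g⁆ = ⁅a⁻¹ * a, g⁆ := hmul a⁻¹ (inv_mem ha) a ha
        have h2 : ⁅a⁻¹ * a, g⁆ = 1 := by group
        exact eq_inv_of_mul_eq_one_left (h1.trans h2) }
  -- K has at most p elements
  have hKsub : (K : Set G) ⊆ Set.range fun w : G => ⁅w, g⁆ := by
    rintro z ⟨a, _, rfl⟩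
    exact ⟨a, rfl⟩
  have hrg : Nat.card (Set.range fun w : G => ⁅w, g⁆) = p := by
    have heq : (Set.range fun w : G => ⁅w, g⁆) =
        (fun z : G => z⁻¹) '' (Set.range fun w : G => ⁅g, w⁆) := by
      ext z
      simp only [Set.mem_range, Set.mem_image]
      constructor
      · rintro ⟨w, rfl⟩
        exact ⟨⁅g, w⁆, ⟨w, rfl⟩, commutatorElement_inv g w⟩
      · rintro ⟨y, ⟨w, rfl⟩, rfl⟩
        exact ⟨w, (commutatorElement_inv g w).symm⟩
    rw [heq, Nat.card_image_of_injective inv_injective _, card_comm_range g, hCg]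
  have hKle : Nat.card K ≤ p := by
    rw [← hrg]
    have h1 : Nat.card K = Set.ncard ((K : Set G)) := Nat.card_coe_set_eq _
    rw [h1, Nat.card_coe_set_eq]
    exact Set.ncard_le_ncard hKsub (Set.toFinite _)
  -- conjugates by powers of g of elements of K stay in K
  have hKconj : ∀ z ∈ K, ∀ i : ℕ, g ^ i * z * (g ^ i)⁻¹ ∈ K := by
    rintro z ⟨a, ha, rfl⟩ i
    have h1 : g ^ i * ⁅a, g⁆ * (g ^ i)⁻¹ = ⁅g ^ i * a * (g ^ i)⁻¹, g ^ i * g * (g ^ i)⁻¹⁆ :=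
      comm_conj' _ _ _
    have h2 : g ^ i * g * (g ^ i)⁻¹ = g := by
      rw [← pow_succ, pow_succ']
      group
    rw [h1, h2]
    exact ⟨g ^ i * a * (g ^ i)⁻¹, Subgroup.Normal.conj_mem inferInstance a ha (g ^ i), rfl⟩
  -- powers of g give commutators in K
  have hpow : ∀ i : ℕ, ⁅x, g ^ i⁆ ∈ K := by
    intro i
    induction i with
    | zero =>
      have : ⁅x, g ^ (0:ℕ)⁆ = 1 := by rw [pow_zero]; group
      rw [this]
      exact K.one_mem
    | succ i ih =>
      rw [pow_succ, comm_mul_right']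
      exact K.mul_mem ih (hKconj _ ⟨x, hxA, rfl⟩ i)
  -- decomposition of arbitrary elements
  have hdecomp : ∀ w : G, ∃ (i : ℕ) (c : G), c ∈ Subgroup.centralizer ({x} : Set G) ∧
      w = g ^ i * c := by
    intro w
    have hQcard : Nat.card (G ⧸ Subgroup.centralizer ({x} : Set G)) = p := by
      rw [← Subgroup.index_eq_card]; exact hCx
    have hgbar : (g : G ⧸ Subgroup.centralizer ({x} : Set G)) ≠ 1 := by
      rw [Ne, QuotientGroup.eq_one_iff]
      exact hg_notin
    have horder : orderOf (g : G ⧸ Subgroup.centralizer ({x} : Set G)) = p := by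
      have hdvd := orderOf_dvd_natCard (g : G ⧸ Subgroup.centralizer ({x} : Set G))
      rw [hQcard] at hdvd
      rcases hp.eq_one_or_self_of_dvd _ hdvd with h | h
      · exact absurd (orderOf_eq_one_iff.mp h) hgbar
      · exact h
    have htop : Subgroup.zpowers (g : G ⧸ Subgroup.centralizer ({x} : Set G)) = ⊤ := by
      apply Subgroup.eq_top_of_card_eq
      rw [Nat.card_zpowers, horder, hQcard]
    have hw : (w : G ⧸ Subgroup.centralizer ({x} : Set G)) ∈
        Subgroup.zpowers (g : G ⧸ Subgroup.centralizer ({x} : Set G)) := by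
      rw [htop]; exact Subgroup.mem_top _
    have hw' : (w : G ⧸ Subgroup.centralizer ({x} : Set G)) ∈
        Submonoid.powers (g : G ⧸ Subgroup.centralizer ({x} : Set G)) := by
      rw [← SetLike.mem_coe, powers_eq_zpowers]
      exact hw
    obtain ⟨i, hi⟩ := hw'
    refine ⟨i, (g ^ i)⁻¹ * w, ?_, by group⟩
    have hq : ((g ^ i : G) : G ⧸ Subgroup.centralizer ({x} : Set G)) = (w : _) := by
      rw [QuotientGroup.mk_pow]
      exact hi
    exact QuotientGroup.eq.mp hq
  -- all commutators ⁅x, w⁆ lie in K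
  have hSsub : ∀ w : G, ⁅x, w⁆ ∈ K := by
    intro w
    obtain ⟨i, c, hc, rfl⟩ := hdecomp w
    have hxc : x * c = c * x := (Subgroup.mem_centralizer_singleton_iff.mp hc).symm
    rw [comm_mul_cancel hxc]
    exact hpow i
  -- K has at least p elements
  have hKge : p ≤ Nat.card K := by
    have h1 : (Set.range fun w : G => ⁅x, w⁆) ⊆ (K : Set G) := by
      rintro z ⟨w, rfl⟩
      exact hSsub w
    have h2 : Nat.card (Set.range fun w : G => ⁅x, w⁆) = p := by
      rw [card_comm_range x, hCx]
    calc p = Set.ncard (Set.range fun w : G => ⁅x, w⁆) := by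
          rw [← Nat.card_coe_set_eq, h2]
      _ ≤ Set.ncard (K : Set G) := Set.ncard_le_ncard h1 (Set.toFinite _)
      _ = Nat.card K := (Nat.card_coe_set_eq _).symm
  exact ⟨K, le_antisymm hKle hKge, hSsub⟩
end Main


/-- A finite `p`-group has element breadth 1 iff its derived subgroup has order `p`. -/
theorem stmt_2 (p : ℕ) (hp : p.Prime) (G : Type*) [Group G] [Finite G]
    (hG : IsPGroup p G) :
    ((∀ x : G, x ∉ Subgroup.center G → (Subgroup.centralizer {x}).index = p) ∧
      ∃ x : G, x ∉ Subgroup.center G) ↔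
    Nat.card (commutator G) = p := by
  have hmemcomm : ∀ a b : G, ⁅a, b⁆ ∈ commutator G := by
    intro a b
    rw [_root_.commutator_def]
    exact Subgroup.commutator_mem_commutator (Subgroup.mem_top a) (Subgroup.mem_top b)
  have hwitness : ∀ u : G, u ∉ Subgroup.center G → ∃ g : G, ⁅u, g⁆ ≠ 1 := by
    intro u hu
    rw [Subgroup.mem_center_iff] at hu
    push_neg at hu
    obtain ⟨g, hgne⟩ := hu
    refine ⟨g, fun h => hgne ?_⟩
    exact ((commutatorElement_eq_one_iff_commute.mp h).symm.eq)
  constructor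
  · rintro ⟨hb, x₀, hx₀⟩
    choose K hKcard hKmem using fun (u : G) (hu : u ∉ Subgroup.center G) =>
      exists_K hp hG hb u hu
    have hnc_of_ncomm : ∀ u v : G, ⁅u, v⁆ ≠ 1 → v ∉ Subgroup.center G := by
      intro u v hne hv
      apply hne
      rw [commutatorElement_eq_one_iff_commute]
      exact (Subgroup.mem_center_iff.mp hv u)
    have hnc_of_ncomm' : ∀ u v : G, ⁅u, v⁆ ≠ 1 → u ∉ Subgroup.center G := by
      intro u v hne hu
      apply hne
      rw [commutatorElement_eq_one_iff_commute]
      exact (Subgroup.mem_center_iff.mp hu v).symm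
    have hlink : ∀ u hu v hv, ⁅u, v⁆ ≠ 1 → K u hu = K v hv := by
      intro u hu v hv hne
      have h1 : ⁅u, v⁆ ∈ K u hu := hKmem u hu v
      have h2 : ⁅u, v⁆ ∈ K v hv := by
        have h3 := hKmem v hv u
        have h4 : ⁅u, v⁆ = ⁅v, u⁆⁻¹ := (commutatorElement_inv v u).symm
        rw [h4]
        exact inv_mem h3
      exact eq_of_prime_card_mem hp (hKcard u hu) (hKcard v hv) hne h1 h2
    have hall : ∀ u hu, K u hu = K x₀ hx₀ := by
      intro u hu
      obtain ⟨g, hg⟩ := hwitness u hu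
      obtain ⟨h, hh⟩ := hwitness x₀ hx₀
      have hgnc : g ∉ Subgroup.center G := hnc_of_ncomm u g hg
      have hhnc : h ∉ Subgroup.center G := hnc_of_ncomm x₀ h hh
      by_cases h1 : ⁅x₀, g⁆ = 1
      · by_cases h2 : ⁅u, h⁆ = 1
        · -- use w = g * h
          have hw1 : ⁅u, g * h⁆ ≠ 1 := by
            rw [comm_mul_right', h2]
            simpa using hg
          have hw2 : ⁅x₀, g * h⁆ ≠ 1 := by
            rw [comm_mul_right', h1, one_mul]
            intro h0
            apply hh
            have := congrArg (fun t => g⁻¹ * t * g) h0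
            simpa [mul_assoc] using this
          have hwnc : g * h ∉ Subgroup.center G := hnc_of_ncomm u (g * h) hw1
          rw [hlink u hu (g * h) hwnc hw1, hlink x₀ hx₀ (g * h) hwnc hw2]
        · rw [hlink u hu h hhnc h2, hlink x₀ hx₀ h hhnc hh]
      · rw [hlink u hu g hgnc hg, hlink x₀ hx₀ g hgnc h1]
    have hKeq : commutator G = K x₀ hx₀ := by
      apply le_antisymm
      · rw [_root_.commutator_def]
        rw [Subgroup.commutator_le]
        intro u _ v _
        by_cases hu : u ∈ Subgroup.center G
        · have : ⁅u, v⁆ = 1 := by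
            rw [commutatorElement_eq_one_iff_commute]
            exact (Subgroup.mem_center_iff.mp hu v).symm
          rw [this]
          exact Subgroup.one_mem _
        · rw [← hall u hu]
          exact hKmem u hu v
      · obtain ⟨g, hg⟩ := hwitness x₀ hx₀
        have ht : ⁅x₀, g⁆ ∈ K x₀ hx₀ := hKmem x₀ hx₀ g
        rw [← zpowers_eq_of_prime_card hp (hKcard x₀ hx₀) hg ht]
        exact Subgroup.zpowers_le.mpr (hmemcomm x₀ g)
    rw [hKeq]
    exact hKcard x₀ hx₀
  · intro hcard
    have hex : ∃ x : G, x ∉ Subgroup.center G := by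
      by_contra hc
      push_neg at hc
      have hbot : commutator G = ⊥ := by
        rw [_root_.commutator_def, eq_bot_iff, Subgroup.commutator_le]
        intro u _ v _
        rw [Subgroup.mem_bot, commutatorElement_eq_one_iff_commute]
        exact (Subgroup.mem_center_iff.mp (hc u) v).symm
      rw [hbot] at hcard
      simp only [Subgroup.card_bot] at hcard
      exact hp.one_lt.ne hcard
    refine ⟨?_, hex⟩
    have hle : commutator G ≤ Subgroup.center G :=
      le_center_of_card_p hp hG (commutator G) hcard
    intro x hx
    have hmulf : ∀ a b : G, ⁅a * b, x⁆ = ⁅a, x⁆ * ⁅b, x⁆ := by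
      intro a b
      have hid : ⁅a * b, x⁆ = a * ⁅b, x⁆ * a⁻¹ * ⁅a, x⁆ := by group
      have hbx : ⁅b, x⁆ ∈ Subgroup.center G := hle (hmemcomm b x)
      have h2 : a * ⁅b, x⁆ * a⁻¹ = ⁅b, x⁆ := by
        rw [Subgroup.mem_center_iff.mp hbx a]
        group
      rw [hid, h2]
      exact (Subgroup.mem_center_iff.mp hbx ⁅a, x⁆).symm
    let f : G →* G := { toFun := fun w => ⁅w, x⁆, map_one' := by group, map_mul' := hmulf }
    have hker : f.ker = Subgroup.centralizer ({x} : Set G) := by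
      ext w
      rw [MonoidHom.mem_ker, Subgroup.mem_centralizer_singleton_iff]
      show ⁅w, x⁆ = 1 ↔ w * x = x * w
      rw [commutatorElement_eq_one_iff_commute]
      exact Iff.rfl
    have hidx : (Subgroup.centralizer ({x} : Set G)).index = Nat.card f.range := by
      rw [← hker]
      exact Subgroup.index_ker f
    have hrle : f.range ≤ commutator G := by
      rintro z ⟨w, rfl⟩
      exact hmemcomm w x
    have hdvd : Nat.card f.range ∣ p := hcard ▸ Subgroup.card_dvd_of_le hrle
    have hne1 : Nat.card f.range ≠ 1 := by
      rw [Ne, Subgroup.card_eq_one]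
      intro hbot
      obtain ⟨g, hg⟩ := hwitness x hx
      apply hg
      have hmem : ⁅g, x⁆ ∈ f.range := ⟨g, rfl⟩
      rw [hbot, Subgroup.mem_bot] at hmem
      rw [← commutatorElement_inv g x, hmem]
      simp
    rcases hp.eq_one_or_self_of_dvd _ hdvd with h | h
    · exact absurd h hne1
    · rw [hidx, h]
end

section
/- Let G be a finite 2-group in which every subgroup has at most 2 conjugates, Z(G) is cyclic, and all involutions of G commute with each other. Then G contains at most three involutions. -/
open Subgroup

/-- If three elements lie in pairwise distinct cosets of `D`, then `D.index ≥ 3`. -/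
private lemma three_le_index' {G : Type*} [Group G] [Finite G] (D : Subgroup G) {g k : G}
    (hg : g ∉ D) (hk : k ∉ D) (hgk : g⁻¹ * k ∉ D) : 3 ≤ D.index := by
  have hinj : Function.Injective
      (fun i : Fin 3 => (![((1 : G) : G ⧸ D), (g : G ⧸ D), (k : G ⧸ D)]) i) := by
    intro i j hij
    have h1g : ((1 : G) : G ⧸ D) ≠ (g : G ⧸ D) := by
      intro h; exact hg (by simpa using (QuotientGroup.eq (s := D)).mp h)
    have h1k : ((1 : G) : G ⧸ D) ≠ (k : G ⧸ D) := by
      intro h; exact hk (by simpa using (QuotientGroup.eq (s := D)).mp h)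
    have hgk' : ((g : G) : G ⧸ D) ≠ (k : G ⧸ D) := by
      intro h; exact hgk ((QuotientGroup.eq (s := D)).mp h)
    fin_cases i <;> fin_cases j <;> simp_all
  have h3 : 3 ≤ Nat.card (G ⧸ D) := by
    have := Nat.card_le_card_of_injective _ hinj
    simpa using this
  exact h3

set_option maxHeartbeats 1000000 in
/-- A finite 2-group of subgroup breadth at most 1 with cyclic center in which all
involutions commute contains at most three involutions. -/
theorem stmt_8 (G : Type*) [Group G] [Finite G] (hG : IsPGroup 2 G)
    (hsbr : ∀ H : Subgroup G, (Subgroup.normalizer (H : Set G)).index ≤ 2)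
    (hZ : IsCyclic (Subgroup.center G))
    (hcomm : ∀ s t : G, orderOf s = 2 → orderOf t = 2 → s * t = t * s) :
    Nat.card {x : G // orderOf x = 2} ≤ 3 := by
  classical
  haveI : Fact (Nat.Prime 2) := ⟨Nat.prime_two⟩
  by_contra hlt
  push_neg at hlt
  set S : Set G := {x : G | orderOf x = 2} with hS
  have hcard : 4 ≤ S.ncard := by
    have : Nat.card {x : G // orderOf x = 2} = S.ncard := Nat.card_coe_set_eq S
    omega
  have hSne : S.Nonempty := by
    rw [← Set.ncard_pos]; omega
  obtain ⟨x₀, hx₀⟩ := hSne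
  haveI : Nontrivial G := ⟨x₀, 1, by
    intro h; rw [hS] at hx₀; simp only [Set.mem_setOf_eq] at hx₀
    rw [h, orderOf_one] at hx₀; omega⟩
  -- the central involution z
  obtain ⟨z, hzc, hz2⟩ : ∃ z : G, z ∈ Subgroup.center G ∧ orderOf z = 2 := by
    haveI := hG.center_nontrivial
    have hpc : IsPGroup 2 (Subgroup.center G) := hG.to_subgroup _
    have hdvd : (2 : ℕ) ∣ Nat.card (Subgroup.center G) := by
      rcases hpc.card_eq_or_dvd with h | h
      · exact absurd h (by
          have := Finite.one_lt_card (α := Subgroup.center G)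
          omega)
      · exact h
    haveI := Fintype.ofFinite (Subgroup.center G)
    obtain ⟨z', hz'⟩ := exists_prime_orderOf_dvd_card (G := Subgroup.center G) 2
      (by rwa [Nat.card_eq_fintype_card] at hdvd)
    exact ⟨(z' : G), z'.2, by rw [Subgroup.orderOf_coe]; exact hz'⟩
  have hz1 : z ≠ 1 := by intro h; rw [h, orderOf_one] at hz2; omega
  have hzz : z * z = 1 := by
    have := pow_orderOf_eq_one z; rwa [hz2, pow_two] at this
  -- uniqueness of the central involution
  have huniq : ∀ w : G, w ∈ Subgroup.center G → orderOf w = 2 → w = z := by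
    intro w hwc hw2
    by_contra hne
    haveI := Fintype.ofFinite (Subgroup.center G)
    have hw1 : w ≠ 1 := by intro h; rw [h, orderOf_one] at hw2; omega
    set Z := Subgroup.center G
    set w' : Z := ⟨w, hwc⟩ with hw'
    set z' : Z := ⟨z, hzc⟩ with hz'
    have hsub : ({1, w', z'} : Finset Z) ⊆ Finset.univ.filter (fun a : Z => a ^ 2 = 1) := by
      intro t ht
      simp only [Finset.mem_insert, Finset.mem_singleton] at ht
      rcases ht with rfl | rfl | rfl <;>
        simp only [Finset.mem_filter, Finset.mem_univ, true_and]
      · exact one_pow 2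
      · apply Subtype.ext
        push_cast
        have := pow_orderOf_eq_one w; rwa [hw2] at this
      · apply Subtype.ext
        push_cast
        have := pow_orderOf_eq_one z; rwa [hz2] at this
    have hc3 : ({1, w', z'} : Finset Z).card = 3 := by
      rw [Finset.card_insert_of_notMem, Finset.card_insert_of_notMem,
        Finset.card_singleton]
      · simp only [Finset.mem_singleton]
        intro h; exact hne (by simpa [hw', hz', Subtype.ext_iff] using h)
      · simp only [Finset.mem_insert, Finset.mem_singleton]
        push_neg
        constructor
        · intro h; exact hw1 (by simpa [hw', Subtype.ext_iff] using h.symm)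
        · intro h; exact hz1 (by simpa [hz', Subtype.ext_iff] using h.symm)
    have hle := IsCyclic.card_pow_eq_one_le (α := Z) (n := 2) (by norm_num)
    have hmono := Finset.card_le_card hsub
    rw [hc3] at hmono
    omega
  -- centralizer membership in conjugation form
  have hmemc : ∀ u g : G, g ∈ centralizer ({u} : Set G) ↔ g * u * g⁻¹ = u := by
    intro u g
    rw [Subgroup.mem_centralizer_singleton_iff]
    constructor
    · intro h
      rw [h, mul_inv_cancel_right]
    · intro h
      have := congrArg (· * g) h
      simpa [mul_assoc] using this
  -- centralizers of involutions have index at most 2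
  have hcent : ∀ x : G, orderOf x = 2 → (centralizer ({x} : Set G)).index ≤ 2 := by
    intro x hx
    have hx2 : x * x = 1 := by
      have := pow_orderOf_eq_one x; rwa [hx, pow_two] at this
    have hle : (Subgroup.normalizer ((zpowers x : Subgroup G) : Set G)) ≤ centralizer ({x} : Set G) := by
      intro g hg
      rw [Subgroup.mem_normalizer_iff] at hg
      have hmem : g * x * g⁻¹ ∈ zpowers x := (hg x).mp (mem_zpowers x)
      obtain ⟨n, hn⟩ := hmem
      have hn' : x ^ n = g * x * g⁻¹ := hn
      have hne1 : g * x * g⁻¹ ≠ 1 := by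
        intro h
        have hx1 : x = 1 := by
          have := congrArg (fun t => g⁻¹ * t * g) h
          simpa [mul_assoc] using this
        rw [hx1, orderOf_one] at hx; omega
      have hx2' : x ^ (2 : ℤ) = 1 := by
        have h2 : x ^ (2 : ℕ) = 1 := by rw [pow_two]; exact hx2
        rw [← zpow_natCast] at h2
        exact_mod_cast h2
      rw [hmemc]
      rcases Int.even_or_odd n with ⟨m, hm⟩ | ⟨m, hm⟩
      · exfalso
        apply hne1
        rw [← hn', hm, show (m + m : ℤ) = 2 * m by ring, zpow_mul, hx2', one_zpow]
      · rw [← hn', hm, zpow_add, zpow_one, zpow_mul, hx2', one_zpow, one_mul]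
    calc (centralizer ({x} : Set G)).index
        ≤ (Subgroup.normalizer ((zpowers x : Subgroup G) : Set G)).index := by
          apply Nat.le_of_dvd
          · exact Nat.pos_of_ne_zero Subgroup.index_ne_zero_of_finite
          · exact Subgroup.index_dvd_of_le hle
      _ ≤ 2 := hsbr _
  -- index is exactly 2 for non-central involutions
  have hcent2 : ∀ x : G, orderOf x = 2 → x ∉ Subgroup.center G →
      (centralizer ({x} : Set G)).index = 2 := by
    intro x hx hxc
    have hne : centralizer ({x} : Set G) ≠ ⊤ := by
      intro h
      apply hxc
      rw [Subgroup.mem_center_iff]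
      intro g
      have hg : g ∈ centralizer ({x} : Set G) := h ▸ Subgroup.mem_top g
      exact Subgroup.mem_centralizer_singleton_iff.mp hg
    have h1 : (centralizer ({x} : Set G)).index ≠ 1 := by
      intro h; exact hne (Subgroup.index_eq_one.mp h)
    have h0 : (centralizer ({x} : Set G)).index ≠ 0 := Subgroup.index_ne_zero_of_finite
    have := hcent x hx
    omega
  -- conjugates of a non-central involution x are exactly x and z*x
  have hconj : ∀ x : G, orderOf x = 2 → x ∉ Subgroup.center G →
      ∀ g : G, g * x * g⁻¹ = x ∨ g * x * g⁻¹ = z * x := by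
    intro x hx hxc
    have hx2 : x * x = 1 := by
      have := pow_orderOf_eq_one x; rwa [hx, pow_two] at this
    have hCi : (centralizer ({x} : Set G)).index = 2 := hcent2 x hx hxc
    obtain ⟨g₀, hg₀⟩ : ∃ g₀, g₀ ∉ centralizer ({x} : Set G) := by
      by_contra h
      push_neg at h
      apply hxc
      rw [Subgroup.mem_center_iff]
      intro g
      exact Subgroup.mem_centralizer_singleton_iff.mp (h g)
    have key : ∀ g, g ∉ centralizer ({x} : Set G) → g * x * g⁻¹ = g₀ * x * g₀⁻¹ := by
      intro g hg
      have hc : g₀⁻¹ * g ∈ centralizer ({x} : Set G) := by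
        by_contra hmem
        have := three_le_index' _ hg₀ hg hmem
        omega
      have hcx : (g₀⁻¹ * g) * x * (g₀⁻¹ * g)⁻¹ = x := (hmemc x _).mp hc
      calc g * x * g⁻¹ = g₀ * ((g₀⁻¹ * g) * x * (g₀⁻¹ * g)⁻¹) * g₀⁻¹ := by group
        _ = g₀ * x * g₀⁻¹ := by rw [hcx]
    obtain ⟨w, hw⟩ : ∃ w : G, w = g₀ * x * g₀⁻¹ := ⟨_, rfl⟩
    have hww : w * w = 1 := by
      rw [hw]
      calc (g₀ * x * g₀⁻¹) * (g₀ * x * g₀⁻¹) = g₀ * (x * x) * g₀⁻¹ := by group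
        _ = 1 := by rw [hx2]; group
    have hwne1 : w ≠ 1 := by
      intro h
      have h' : g₀ * x * g₀⁻¹ = 1 := hw.symm.trans h
      have hx1 : x = 1 := by
        have := congrArg (fun t => g₀⁻¹ * t * g₀) h'
        simpa [mul_assoc] using this
      rw [hx1, orderOf_one] at hx; omega
    have hw2 : orderOf w = 2 := orderOf_eq_prime (by rw [pow_two]; exact hww) hwne1
    have hwx : w * x = x * w := hcomm w x hw2 hx
    have hwne : w ≠ x := fun h => hg₀ ((hmemc x g₀).mpr (hw.symm.trans h))
    obtain ⟨d, hd⟩ : ∃ d : G, d = w * x := ⟨_, rfl⟩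
    have hd1 : d ≠ 1 := by
      intro h
      apply hwne
      have := congrArg (· * x) (hd.symm.trans h)
      simpa [mul_assoc, hx2] using this
    have hdd : d * d = 1 := by
      rw [hd]
      calc (w * x) * (w * x) = w * (x * w) * x := by group
        _ = w * (w * x) * x := by rw [← hwx]
        _ = (w * w) * (x * x) := by group
        _ = 1 := by rw [hww, hx2, one_mul]
    have hdx : x * d = d * x := by
      rw [hd]
      calc x * (w * x) = (x * w) * x := (mul_assoc _ _ _).symm
        _ = (w * x) * x := by rw [← hwx]
    have hdxw : d * x = w := by rw [hd, mul_assoc, hx2, mul_one]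
    have hA : ∀ g : G, (g ∈ centralizer ({x} : Set G) ∧ g * x * g⁻¹ = x) ∨
        (g ∉ centralizer ({x} : Set G) ∧ g * x * g⁻¹ = d * x) := by
      intro g
      by_cases hg : g ∈ centralizer ({x} : Set G)
      · exact Or.inl ⟨hg, (hmemc x g).mp hg⟩
      · refine Or.inr ⟨hg, ?_⟩
        rw [hdxw, key g hg]
        exact hw.symm
    have hdc : d ∈ Subgroup.center G := by
      rw [Subgroup.mem_center_iff]
      intro k
      suffices h : k * d * k⁻¹ = d by
        have := congrArg (· * k) h
        simpa [mul_assoc] using this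
      have hcalc : k * d * k⁻¹ = ((k * g₀) * x * (k * g₀)⁻¹) * (k * x * k⁻¹) := by
        rw [hd, hw]; group
      by_cases hk : k ∈ centralizer ({x} : Set G)
      · have hkg₀ : k * g₀ ∉ centralizer ({x} : Set G) := by
          intro h
          exact hg₀ (by simpa using mul_mem (inv_mem hk) h)
        rcases hA (k * g₀) with ⟨h', _⟩ | ⟨_, he⟩
        · exact absurd h' hkg₀
        · rw [hcalc, he, (hmemc x k).mp hk, mul_assoc, hx2, mul_one]
      · have hkx : k * x * k⁻¹ = d * x := by
          rcases hA k with ⟨h', _⟩ | ⟨_, h'⟩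
          · exact absurd h' hk
          · exact h'
        rcases hA (k * g₀) with ⟨_, he⟩ | ⟨_, he⟩
        · rw [hcalc, he, hkx]
          calc x * (d * x) = (x * d) * x := (mul_assoc _ _ _).symm
            _ = d * x * x := by rw [hdx]
            _ = d := by rw [mul_assoc, hx2, mul_one]
        · exfalso
          have h1 : k * d * k⁻¹ = 1 := by
            rw [hcalc, he, hkx]
            calc d * x * (d * x) = d * (x * d) * x := by group
              _ = d * (d * x) * x := by rw [hdx]
              _ = (d * d) * (x * x) := by group
              _ = 1 := by rw [hdd, hx2, one_mul]
          apply hd1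
          have := congrArg (fun t => k⁻¹ * t * k) h1
          simpa [mul_assoc] using this
    have hdz : d = z :=
      huniq d hdc (orderOf_eq_prime (by rw [pow_two]; exact hdd) hd1)
    intro g
    rcases hA g with ⟨_, h⟩ | ⟨_, h⟩
    · exact Or.inl h
    · exact Or.inr (by rw [h, hdz])
  -- pick an involution a ≠ z
  obtain ⟨a, haS, hane⟩ : ∃ a : G, orderOf a = 2 ∧ a ≠ z := by
    by_contra h
    push_neg at h
    have hsub : S ⊆ {z} := fun t ht => h t ht
    have := Set.ncard_le_ncard hsub (Set.finite_singleton z)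
    rw [Set.ncard_singleton] at this
    omega
  have ha1 : a ≠ 1 := by intro h; rw [h, orderOf_one] at haS; omega
  have haa : a * a = 1 := by
    have := pow_orderOf_eq_one a; rwa [haS, pow_two] at this
  -- pick an involution b ∉ {z, a, a*z}
  obtain ⟨b, hbS, hbne⟩ : ∃ b : G, orderOf b = 2 ∧ b ∉ ({z, a, a * z} : Set G) := by
    by_contra h
    push_neg at h
    have hsub : S ⊆ {z, a, a * z} := fun t ht => h t ht
    have hmono := Set.ncard_le_ncard hsub (Set.toFinite _)
    have h3 : ({z, a, a * z} : Set G).ncard ≤ 3 := by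
      apply le_trans (Set.ncard_insert_le _ _)
      have h2 : ({a, a * z} : Set G).ncard ≤ 2 := by
        apply le_trans (Set.ncard_insert_le _ _)
        rw [Set.ncard_singleton]
      omega
    omega
  simp only [Set.mem_insert_iff, Set.mem_singleton_iff, not_or] at hbne
  obtain ⟨hbz, hba, hbaz⟩ := hbne
  have hb1 : b ≠ 1 := by intro h; rw [h, orderOf_one] at hbS; omega
  have hbb : b * b = 1 := by
    have := pow_orderOf_eq_one b; rwa [hbS, pow_two] at this
  have hcab : a * b = b * a := hcomm a b haS hbS
  have hzcomm : ∀ g : G, g * z = z * g := fun g => Subgroup.mem_center_iff.mp hzc g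
  have e0 : a * (a * b) = b := by rw [← mul_assoc, haa, one_mul]
  have habne1 : a * b ≠ 1 := by
    intro h
    apply hba
    have h' : a * (a * b) = a * 1 := by rw [h]
    rw [e0, mul_one] at h'
    exact h'
  have habab : (a * b) * (a * b) = 1 := by
    calc (a * b) * (a * b) = a * (b * a) * b := by group
      _ = a * (a * b) * b := by rw [← hcab]
      _ = (a * a) * (b * b) := by group
      _ = 1 := by rw [haa, hbb, one_mul]
  have habS : orderOf (a * b) = 2 :=
    orderOf_eq_prime (by rw [pow_two]; exact habab) habne1
  have hanc : a ∉ Subgroup.center G := fun h => hane (huniq a h haS)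
  have hbnc : b ∉ Subgroup.center G := fun h => hbz (huniq b h hbS)
  have habnc : a * b ∉ Subgroup.center G := by
    intro h
    have habz := huniq (a * b) h habS
    apply hbaz
    have h' : a * (a * b) = a * z := by rw [habz]
    rw [e0] at h'
    exact h'
  -- the Klein four subgroup K = {1, a, b, ab}
  have e1 : a * (a * b) = b := by rw [← mul_assoc, haa, one_mul]
  have e2 : b * (a * b) = a := by
    rw [← mul_assoc, ← hcab, mul_assoc, hbb, mul_one]
  have e3 : (a * b) * a = b := by
    rw [mul_assoc, ← hcab, ← mul_assoc, haa, one_mul]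
  have e4 : (a * b) * b = a := by rw [mul_assoc, hbb, mul_one]
  have ainv : a⁻¹ = a := inv_eq_of_mul_eq_one_right haa
  have binv : b⁻¹ = b := inv_eq_of_mul_eq_one_right hbb
  have abinv : (a * b)⁻¹ = a * b := inv_eq_of_mul_eq_one_right habab
  set K : Subgroup G :=
    { carrier := {1, a, b, a * b}
      one_mem' := by simp
      mul_mem' := by
        intro s t hs ht
        simp only [Set.mem_insert_iff, Set.mem_singleton_iff] at hs ht ⊢
        rcases hs with rfl | rfl | rfl | rfl <;> rcases ht with rfl | rfl | rfl | rfl <;>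
          simp only [one_mul, mul_one, haa, hbb, e1, e2, e3, e4, habab, ← hcab] <;>
          tauto
      inv_mem' := by
        intro s hs
        simp only [Set.mem_insert_iff, Set.mem_singleton_iff] at hs ⊢
        rcases hs with rfl | rfl | rfl | rfl <;>
          simp only [inv_one, ainv, binv, abinv] <;> tauto } with hK
  have hKmem : ∀ t : G, t ∈ K ↔ t = 1 ∨ t = a ∨ t = b ∨ t = a * b := by
    intro t
    constructor
    · intro ht
      exact ht
    · intro ht
      show t ∈ ({1, a, b, a * b} : Set G)
      simpa [Set.mem_insert_iff, Set.mem_singleton_iff] using ht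
  -- z*a ∉ K and z*b ∉ K
  have hzaK : z * a ∉ K := by
    rw [hKmem]
    push_neg
    refine ⟨?_, ?_, ?_, ?_⟩
    · intro h
      apply hane
      have := congrArg (· * a) h
      simpa [mul_assoc, haa] using this.symm
    · intro h
      apply hz1
      have := congrArg (· * a) h
      simpa [mul_assoc, haa] using this
    · intro h
      apply hbaz
      rw [← h, hzcomm a]
    · intro h
      apply hbz
      have h' : z * a * a = (a * b) * a := by rw [h]
      rw [mul_assoc, haa, mul_one, e3] at h'
      exact h'.symm
  have hzbK : z * b ∉ K := by
    rw [hKmem]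
    push_neg
    refine ⟨?_, ?_, ?_, ?_⟩
    · intro h
      apply hbz
      have := congrArg (· * b) h
      simpa [mul_assoc, hbb] using this.symm
    · intro h
      apply hbaz
      have h' : z * (z * b) = z * a := by rw [h]
      rw [← mul_assoc, hzz, one_mul] at h'
      rw [h', hzcomm a]
    · intro h
      apply hz1
      have := congrArg (· * b) h
      simpa [mul_assoc, hbb] using this
    · intro h
      apply hane
      have h' : z * b * b = (a * b) * b := by rw [h]
      rw [mul_assoc, hbb, mul_one, e4] at h'
      exact h'.symm
  -- N(K) is contained in the intersection of the two centralizers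
  have hCa2 : (centralizer ({a} : Set G)).index = 2 := hcent2 a haS hanc
  have hCb2 : (centralizer ({b} : Set G)).index = 2 := hcent2 b hbS hbnc
  have hNle : (Subgroup.normalizer (K : Set G)) ≤ centralizer ({a} : Set G) ⊓ centralizer ({b} : Set G) := by
    intro g hg
    rw [Subgroup.mem_normalizer_iff] at hg
    have hgaK : g * a * g⁻¹ ∈ K := (hg a).mp ((hKmem a).mpr (Or.inr (Or.inl rfl)))
    have hgbK : g * b * g⁻¹ ∈ K := (hg b).mp ((hKmem b).mpr (Or.inr (Or.inr (Or.inl rfl))))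
    have hga : g * a * g⁻¹ = a := by
      rcases hconj a haS hanc g with h | h
      · exact h
      · exact absurd (h ▸ hgaK) hzaK
    have hgb : g * b * g⁻¹ = b := by
      rcases hconj b hbS hbnc g with h | h
      · exact h
      · exact absurd (h ▸ hgbK) hzbK
    exact Subgroup.mem_inf.mpr ⟨(hmemc a g).mpr hga, (hmemc b g).mpr hgb⟩
  -- Ca ≠ Cb
  have hCaCb : centralizer ({a} : Set G) ≠ centralizer ({b} : Set G) := by
    intro heq
    obtain ⟨g, hg⟩ : ∃ g, g ∉ centralizer ({a} : Set G) := by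
      by_contra h
      push_neg at h
      apply hanc
      rw [Subgroup.mem_center_iff]
      intro g
      exact Subgroup.mem_centralizer_singleton_iff.mp (h g)
    have hgb' : g ∉ centralizer ({b} : Set G) := heq ▸ hg
    have hga : g * a * g⁻¹ = z * a := by
      rcases hconj a haS hanc g with h | h
      · exact absurd ((hmemc a g).mpr h) hg
      · exact h
    have hgb : g * b * g⁻¹ = z * b := by
      rcases hconj b hbS hbnc g with h | h
      · exact absurd ((hmemc b g).mpr h) hgb'
      · exact h
    have hgab : g * (a * b) * g⁻¹ = a * b := by
      calc g * (a * b) * g⁻¹ = (g * a * g⁻¹) * (g * b * g⁻¹) := by group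
        _ = (z * a) * (z * b) := by rw [hga, hgb]
        _ = z * (a * z) * b := by group
        _ = z * (z * a) * b := by rw [hzcomm a]
        _ = (z * z) * (a * b) := by group
        _ = a * b := by rw [hzz, one_mul]
    have hgmem : g ∈ centralizer ({a * b} : Set G) := (hmemc _ g).mpr hgab
    have hle : centralizer ({a} : Set G) ≤ centralizer ({a * b} : Set G) := by
      intro c hc
      have hca := (hmemc a c).mp hc
      have hcb := (hmemc b c).mp (heq ▸ hc)
      rw [hmemc]
      calc c * (a * b) * c⁻¹ = (c * a * c⁻¹) * (c * b * c⁻¹) := by group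
        _ = a * b := by rw [hca, hcb]
    have hrel := Subgroup.relIndex_mul_index hle
    rw [hCa2] at hrel
    have hrne1 : (centralizer ({a} : Set G)).relIndex (centralizer ({a * b} : Set G)) ≠ 1 :=
      fun h1 => hg ((Subgroup.relIndex_eq_one.mp h1) hgmem)
    have hidvd : (centralizer ({a * b} : Set G)).index ∣ 2 := Dvd.intro_left _ hrel
    have hi1 : (centralizer ({a * b} : Set G)).index = 1 := by
      rcases (Nat.prime_two.eq_one_or_self_of_dvd _ hidvd) with h | h
      · exact h
      · rw [h] at hrel; omega
    have htop : centralizer ({a * b} : Set G) = ⊤ := Subgroup.index_eq_one.mp hi1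
    apply habnc
    rw [Subgroup.mem_center_iff]
    intro g'
    have hg' : g' ∈ centralizer ({a * b} : Set G) := htop ▸ Subgroup.mem_top g'
    exact Subgroup.mem_centralizer_singleton_iff.mp hg'
  -- neither centralizer contains the other
  have hnle : ∀ (P Q : Subgroup G), P.index = 2 → Q.index = 2 → P ≠ Q → ¬P ≤ Q := by
    intro P Q hP hQ hne hle
    have hrel := Subgroup.relIndex_mul_index hle
    rw [hP, hQ] at hrel
    have h1 : P.relIndex Q = 1 := by omega
    rw [Subgroup.relIndex_eq_one] at h1
    exact hne (le_antisymm hle h1)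
  obtain ⟨g, hgCa, hgCb⟩ : ∃ g, g ∈ centralizer ({a} : Set G) ∧
      g ∉ centralizer ({b} : Set G) := by
    have h := hnle _ _ hCa2 hCb2 hCaCb
    rw [SetLike.le_def] at h
    push_neg at h
    exact h
  obtain ⟨k, hkCb, hkCa⟩ : ∃ k, k ∈ centralizer ({b} : Set G) ∧
      k ∉ centralizer ({a} : Set G) := by
    have h := hnle _ _ hCb2 hCa2 (Ne.symm hCaCb)
    rw [SetLike.le_def] at h
    push_neg at h
    exact h
  have hgD : g ∉ centralizer ({a} : Set G) ⊓ centralizer ({b} : Set G) := by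
    intro h; exact hgCb (Subgroup.mem_inf.mp h).2
  have hkD : k ∉ centralizer ({a} : Set G) ⊓ centralizer ({b} : Set G) := by
    intro h; exact hkCa (Subgroup.mem_inf.mp h).1
  have hgkD : g⁻¹ * k ∉ centralizer ({a} : Set G) ⊓ centralizer ({b} : Set G) := by
    intro h
    apply hkCa
    have h1 := (Subgroup.mem_inf.mp h).1
    have h2 := mul_mem hgCa h1
    simpa [← mul_assoc] using h2
  have h3 : 3 ≤ (centralizer ({a} : Set G) ⊓ centralizer ({b} : Set G)).index :=
    three_le_index' _ hgD hkD hgkD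
  have hdvd : (centralizer ({a} : Set G) ⊓ centralizer ({b} : Set G)).index ∣
      (Subgroup.normalizer (K : Set G)).index := Subgroup.index_dvd_of_le hNle
  have hle' : (centralizer ({a} : Set G) ⊓ centralizer ({b} : Set G)).index ≤
      (Subgroup.normalizer (K : Set G)).index :=
    Nat.le_of_dvd (Nat.pos_of_ne_zero Subgroup.index_ne_zero_of_finite) hdvd
  have := hsbr K
  omega
end

section
/- Let G be a finite 2-group with two non-commuting involutions s and t such that every subgroup of G has at most 2 conjugates. Then ⟨s, t⟩ is isomorphic to the dihedral group D8 of order 8, and ⟨s, t⟩ is normal in G. -/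
open Subgroup

private lemma three_le_card {X : Type*} [Finite X] {a b c : X}
    (hab : a ≠ b) (hac : a ≠ c) (hbc : b ≠ c) : 3 ≤ Nat.card X := by
  have hinj : Function.Injective (![a, b, c] : Fin 3 → X) := by
    intro i j hij
    fin_cases i <;> fin_cases j <;> simp_all
  simpa using Nat.card_le_card_of_injective _ hinj

private lemma mem_zpowers_sq {G : Type*} [Group G] {s x : G} (hs : s ^ 2 = 1)
    (hx : x ∈ Subgroup.zpowers s) : x = 1 ∨ x = s := by
  obtain ⟨k, hk⟩ := hx
  have hk' : s ^ k = x := hk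
  rw [← hk']
  have h2 : s ^ (2 : ℤ) = 1 := by exact_mod_cast hs
  have hmod : s ^ k = s ^ (k % 2) := by
    conv_lhs => rw [← Int.emod_add_mul_ediv k 2]
    rw [zpow_add, zpow_mul, h2, one_zpow, mul_one]
  rcases Int.emod_two_eq k with h | h <;> rw [hmod, h] <;> simp

/-- Key lemma: breadth ≤ 1 forces every conjugate of an involution `s`
to lie in `closure {s, t}` whenever `t` is a noncommuting involution. -/
private lemma conj_mem_aux {G : Type*} [Group G] [Finite G]
    (hsbr : ∀ H : Subgroup G, (Subgroup.normalizer (H : Set G)).index ≤ 2)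
    (s t : G) (hs : s ^ 2 = 1) (hs1 : s ≠ 1) (hst : s * t ≠ t * s) (g : G) :
    g * s * g⁻¹ ∈ Subgroup.closure ({s, t} : Set G) := by
  set N := Subgroup.normalizer ((Subgroup.zpowers s : Subgroup G) : Set G) with hN
  have hsmem : s ∈ Subgroup.closure ({s, t} : Set G) :=
    Subgroup.subset_closure (Set.mem_insert _ _)
  have htmem : t ∈ Subgroup.closure ({s, t} : Set G) :=
    Subgroup.subset_closure (Set.mem_insert_of_mem _ rfl)
  have hzle : Subgroup.zpowers s ≤ Subgroup.closure ({s, t} : Set G) :=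
    Subgroup.zpowers_le.mpr hsmem
  have htN : t ∉ N := by
    intro htN
    have hmem := ((Subgroup.mem_normalizer_iff.mp htN) s).mp (Subgroup.mem_zpowers s)
    rcases mem_zpowers_sq hs hmem with h | h
    · apply hs1
      have := congrArg (fun x => t⁻¹ * x * t) h
      simpa [mul_assoc] using this
    · apply hst
      have h2 : t * s = s * t := by
        simpa [mul_assoc] using congrArg (fun x => x * t) h
      exact h2.symm
  by_cases hg : g ∈ N
  · exact hzle (((Subgroup.mem_normalizer_iff.mp hg) s).mp (Subgroup.mem_zpowers s))
  by_cases hgt : g⁻¹ * t ∈ N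
  · have hn : (g⁻¹ * t)⁻¹ ∈ N := inv_mem hgt
    have hmid : (g⁻¹ * t)⁻¹ * s * ((g⁻¹ * t)⁻¹)⁻¹ ∈ Subgroup.zpowers s :=
      ((Subgroup.mem_normalizer_iff.mp hn) s).mp (Subgroup.mem_zpowers s)
    have heq : g * s * g⁻¹ = t * ((g⁻¹ * t)⁻¹ * s * ((g⁻¹ * t)⁻¹)⁻¹) * t⁻¹ := by
      group
    rw [heq]
    exact mul_mem (mul_mem htmem (hzle hmid)) (inv_mem htmem)
  · exfalso
    have h1g : ((1 : G) : G ⧸ N) ≠ (g : G ⧸ N) := by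
      intro h
      exact hg (by simpa using QuotientGroup.eq.mp h)
    have h1t : ((1 : G) : G ⧸ N) ≠ (t : G ⧸ N) := by
      intro h
      exact htN (by simpa using QuotientGroup.eq.mp h)
    have hgtq : ((g : G) : G ⧸ N) ≠ (t : G ⧸ N) := by
      intro h
      exact hgt (QuotientGroup.eq.mp h)
    have h3 : 3 ≤ Nat.card (G ⧸ N) := three_le_card h1g h1t hgtq
    have h2 : Nat.card (G ⧸ N) ≤ 2 := hsbr (Subgroup.zpowers s)
    omega

/-- In a finite 2-group of subgroup breadth at most 1, two non-commuting involutions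
generate a subgroup isomorphic to `D₈` which is normal. -/
theorem stmt_9 (G : Type*) [Group G] [Finite G] (hG : IsPGroup 2 G)
    (hsbr : ∀ H : Subgroup G, (Subgroup.normalizer (H : Set G)).index ≤ 2)
    (s t : G) (hs : orderOf s = 2) (ht : orderOf t = 2) (hst : s * t ≠ t * s) :
    Nonempty (Subgroup.closure {s, t} ≃* DihedralGroup 4) ∧
      (Subgroup.closure {s, t}).Normal := by
  have hs2 : s ^ 2 = 1 := by rw [← hs]; exact pow_orderOf_eq_one s
  have ht2 : t ^ 2 = 1 := by rw [← ht]; exact pow_orderOf_eq_one t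
  have hs1 : s ≠ 1 := by
    intro h; rw [h, orderOf_one] at hs; omega
  have ht1 : t ≠ 1 := by
    intro h; rw [h, orderOf_one] at ht; omega
  set a := s * t with ha
  have hst' : s * t ≠ t * s := by rw [← ha]; exact hst
  have hsinv : s⁻¹ = s := by
    rw [← mul_eq_one_iff_inv_eq, ← pow_two, hs2]
  have htinv : t⁻¹ = t := by
    rw [← mul_eq_one_iff_inv_eq, ← pow_two, ht2]
  have hainv : a⁻¹ = t * s := by rw [ha, mul_inv_rev, hsinv, htinv]
  have hsas : s * a * s⁻¹ = a⁻¹ := by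
    rw [hainv, hsinv, ha, ← mul_assoc, ← pow_two, hs2, one_mul]
  have ha2 : a ^ 2 ≠ 1 := by
    intro h
    apply hst
    rw [pow_two] at h
    have hinv : a⁻¹ = a := inv_eq_of_mul_eq_one_right h
    exact (hainv.symm.trans (hinv.trans ha)).symm
  -- a ^ 4 = 1 via the breadth hypothesis
  have ha4 : a ^ 4 = 1 := by
    by_contra ha4
    set N := Subgroup.normalizer ((Subgroup.zpowers s : Subgroup G) : Set G) with hN
    have haN : a ∉ N := by
      intro hmem
      rcases mem_zpowers_sq hs2 (((Subgroup.mem_normalizer_iff.mp hmem) s).mp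
        (Subgroup.mem_zpowers s)) with h | h
      · apply hs1
        have := congrArg (fun x => a⁻¹ * x * a) h
        simpa [mul_assoc] using this
      · apply ha2
        have hcomm : a * s = s * a := by
          have h' := congrArg (fun x => x * a) h
          rwa [inv_mul_cancel_right] at h'
        have hinva : a⁻¹ = a := by
          rw [← hsas, ← hcomm]
          exact mul_inv_cancel_right a s
        rw [pow_two]
        nth_rewrite 1 [← hinva]
        exact inv_mul_cancel a
    have ha2N : a ^ 2 ∉ N := by
      intro hmem
      rcases mem_zpowers_sq hs2 (((Subgroup.mem_normalizer_iff.mp hmem) s).mp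
        (Subgroup.mem_zpowers s)) with h | h
      · apply hs1
        have := congrArg (fun x => (a ^ 2)⁻¹ * x * a ^ 2) h
        simpa [mul_assoc] using this
      · apply ha4
        have hconj2 : s * a ^ 2 * s⁻¹ = (a ^ 2)⁻¹ := by
          have hcp : s * a ^ 2 * s⁻¹ = (s * a * s⁻¹) ^ 2 := (conj_pow).symm
          rw [hcp, hsas, ← inv_pow]
        have hcomm : a ^ 2 * s = s * a ^ 2 := by
          have h' := congrArg (fun x => x * a ^ 2) h
          rwa [inv_mul_cancel_right] at h'
        have hinva : (a ^ 2)⁻¹ = a ^ 2 := by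
          rw [← hconj2, ← hcomm]
          exact mul_inv_cancel_right _ s
        have h4 : a ^ 2 * a ^ 2 = 1 := by
          nth_rewrite 1 [← hinva]
          exact inv_mul_cancel _
        rw [show (4 : ℕ) = 2 + 2 from rfl, pow_add]
        exact h4
    have h1a : ((1 : G) : G ⧸ N) ≠ (a : G ⧸ N) := fun h =>
      haN (by simpa using QuotientGroup.eq.mp h)
    have h1a2 : ((1 : G) : G ⧸ N) ≠ ((a ^ 2 : G) : G ⧸ N) := fun h =>
      ha2N (by simpa using QuotientGroup.eq.mp h)
    have haa2 : ((a : G) : G ⧸ N) ≠ ((a ^ 2 : G) : G ⧸ N) := fun h =>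
      haN (by simpa [pow_two, mul_assoc] using QuotientGroup.eq.mp h)
    have h3 : 3 ≤ Nat.card (G ⧸ N) := three_le_card h1a h1a2 haa2
    have h2 : Nat.card (G ⧸ N) ≤ 2 := hsbr (Subgroup.zpowers s)
    omega
  have horder : orderOf a = 4 := by
    have hdvd : orderOf a ∣ 2 ^ 2 := orderOf_dvd_of_pow_eq_one (by norm_num [ha4])
    obtain ⟨k, hk2, hk⟩ := (Nat.dvd_prime_pow Nat.prime_two).mp hdvd
    interval_cases k
    · exfalso
      apply ha2
      rw [pow_zero] at hk
      rw [orderOf_eq_one_iff.mp hk]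
      simp
    · exfalso
      apply ha2
      rw [pow_one] at hk
      rw [← hk]
      exact pow_orderOf_eq_one a
    · rw [hk]; norm_num
  -- the power map from ZMod 4
  set gmap : ZMod 4 → G := fun i => a ^ i.val with hgmap
  have gadd : ∀ i j : ZMod 4, gmap (i + j) = gmap i * gmap j := by
    intro i j
    show a ^ (i + j).val = a ^ i.val * a ^ j.val
    rw [ZMod.val_add, ← pow_add]
    have h := pow_mod_orderOf a (i.val + j.val)
    rw [horder] at h
    exact h
  have g0 : gmap 0 = 1 := by simp [hgmap]
  have gneg : ∀ i : ZMod 4, gmap (-i) = (gmap i)⁻¹ := by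
    intro i
    have h : gmap (-i) * gmap i = 1 := by rw [← gadd]; simp [g0]
    exact eq_inv_of_mul_eq_one_left h
  have sgs : ∀ i : ZMod 4, s * gmap i * s⁻¹ = gmap (-i) := by
    intro i
    show s * a ^ i.val * s⁻¹ = gmap (-i)
    rw [← conj_pow, hsas, gneg]
    show _ = (a ^ i.val)⁻¹
    rw [inv_pow]
  have key : ∀ i : ZMod 4, gmap i * s = s * gmap (-i) := by
    intro i
    have h := sgs (-i)
    rw [neg_neg] at h
    rw [← h]
    group
  -- build the monoid hom from DihedralGroup 4
  set f : DihedralGroup 4 →* G :=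
    { toFun := fun x => match x with
        | DihedralGroup.r i => gmap i
        | DihedralGroup.sr i => s * gmap i
      map_one' := by rw [DihedralGroup.one_def]; exact g0
      map_mul' := by
        rintro (i | i) (j | j)
        · show gmap (i + j) = gmap i * gmap j
          exact gadd i j
        · show s * gmap (j - i) = gmap i * (s * gmap j)
          rw [← mul_assoc, key i, mul_assoc, ← gadd, sub_eq_neg_add]
        · show s * gmap (i + j) = s * gmap i * gmap j
          rw [gadd, mul_assoc]
        · show gmap (j - i) = s * gmap i * (s * gmap j)
          have h1 : s * gmap i * (s * gmap j) = s * (gmap i * s * gmap j) := by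
            group
          rw [h1, key i]
          have h2 : s * (s * gmap (-i) * gmap j) = s * s * (gmap (-i) * gmap j) := by
            group
          rw [h2, ← pow_two, hs2, one_mul, ← gadd, sub_eq_neg_add] } with hf
  have hsa : s ∉ Subgroup.zpowers a := by
    intro hmem
    obtain ⟨k, hk⟩ := hmem
    have hk' : a ^ k = s := hk
    have hcomm : a * s = s * a := by
      rw [← hk']
      exact ((Commute.refl a).zpow_right k).eq
    have hinva : a⁻¹ = a := by
      rw [← hsas, ← hcomm]
      exact mul_inv_cancel_right a s
    apply ha2
    rw [pow_two]
    nth_rewrite 1 [← hinva]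
    exact inv_mul_cancel a
  have hinj : Function.Injective f := by
    rw [injective_iff_map_eq_one]
    rintro (i | i) hfx
    · have hpow : a ^ i.val = 1 := hfx
      have hdvd : orderOf a ∣ i.val := orderOf_dvd_of_pow_eq_one hpow
      rw [horder] at hdvd
      have hval : i.val = 0 := by
        have := ZMod.val_lt i
        omega
      have : i = 0 := by rwa [← ZMod.val_eq_zero]
      rw [this]
      rfl
    · exfalso
      have h1 : s * gmap i = 1 := hfx
      apply hsa
      have hseq : s = (gmap i)⁻¹ := by
        rwa [← mul_eq_one_iff_eq_inv]
      rw [hseq]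
      exact inv_mem (pow_mem (Subgroup.mem_zpowers a) i.val)
  have hrange : f.range = Subgroup.closure ({s, t} : Set G) := by
    apply le_antisymm
    · rintro x ⟨y, rfl⟩
      have hsmem : s ∈ Subgroup.closure ({s, t} : Set G) :=
        Subgroup.subset_closure (Set.mem_insert _ _)
      have htmem : t ∈ Subgroup.closure ({s, t} : Set G) :=
        Subgroup.subset_closure (Set.mem_insert_of_mem _ rfl)
      have hamem : a ∈ Subgroup.closure ({s, t} : Set G) := mul_mem hsmem htmem
      rcases y with i | i
      · exact pow_mem hamem i.val
      · exact mul_mem hsmem (pow_mem hamem i.val)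
    · rw [Subgroup.closure_le]
      rintro x hx
      simp only [Set.mem_insert_iff, Set.mem_singleton_iff] at hx
      rcases hx with h | h
      · exact ⟨DihedralGroup.sr 0, by
          rw [h]
          show s * gmap 0 = s
          rw [g0, mul_one]⟩
      · exact ⟨DihedralGroup.sr 1, by
          rw [h]
          show s * gmap 1 = t
          haveI : Fact (1 < 4) := ⟨by norm_num⟩
          have h1 : gmap 1 = a := by
            show a ^ (1 : ZMod 4).val = a
            rw [ZMod.val_one, pow_one]
          rw [h1, ha, ← mul_assoc, ← pow_two, hs2, one_mul]⟩
  have e1 : DihedralGroup 4 ≃* f.range := MonoidHom.ofInjective hinj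
  have e2 : (f.range : Subgroup G) ≃* Subgroup.closure ({s, t} : Set G) :=
    MulEquiv.subgroupCongr hrange
  refine ⟨⟨(e1.trans e2).symm⟩, ?_⟩
  constructor
  intro n hn g
  induction hn using Subgroup.closure_induction with
  | mem x hx =>
    simp only [Set.mem_insert_iff, Set.mem_singleton_iff] at hx
    rcases hx with h | h
    · rw [h]
      exact conj_mem_aux hsbr s t hs2 hs1 hst' g
    · rw [h]
      have hc := conj_mem_aux hsbr t s ht2 ht1 (fun hh => hst' hh.symm) g
      rwa [Set.pair_comm] at hc
  | one => simpa using one_mem _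
  | mul x y hx hy ihx ihy =>
    have hxy : g * (x * y) * g⁻¹ = (g * x * g⁻¹) * (g * y * g⁻¹) := by group
    rw [hxy]; exact mul_mem ihx ihy
  | inv x hx ihx =>
    have hxi : g * x⁻¹ * g⁻¹ = (g * x * g⁻¹)⁻¹ := by group
    rw [hxi]; exact inv_mem ihx
end

section
/- Let G be a finite p-group with an abelian subgroup A such that G/A is cyclic. Then |A| = |G'| · |A ∩ Z(G)|. -/
open scoped commutatorElement

/-- If `A` is an abelian normal subgroup of a finite `p`-group `G` with `G/A` cyclic,
then `|A| = |G'| · |A ∩ Z(G)|`. -/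
theorem stmt_11 (p : ℕ) (hp : p.Prime) (G : Type*) [Group G] [Finite G]
    (hG : IsPGroup p G) (A : Subgroup G) [A.Normal]
    (hab : ∀ x ∈ A, ∀ y ∈ A, x * y = y * x)
    (hcyc : IsCyclic (G ⧸ A)) :
    Nat.card A = Nat.card (commutator G) * Nat.card (A ⊓ Subgroup.center G : Subgroup G) := by
  classical
  obtain ⟨gbar, hgbar⟩ := hcyc.exists_generator
  obtain ⟨g, rfl⟩ := QuotientGroup.mk'_surjective A gbar
  -- every element of `G` decomposes as `a * g ^ n` with `a ∈ A`
  have hdec : ∀ x : G, ∃ a, a ∈ A ∧ ∃ n : ℤ, x = a * g ^ n := by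
    intro x
    obtain ⟨n, hn⟩ := hgbar (QuotientGroup.mk' A x)
    refine ⟨x * (g ^ n)⁻¹, ?_, n, by group⟩
    have h1 : (QuotientGroup.mk' A) (x * (g ^ n)⁻¹) = 1 := by
      have hn' : ((QuotientGroup.mk' A) g) ^ n = (QuotientGroup.mk' A) x := hn
      rw [map_mul, map_inv, map_zpow, hn']
      group
    exact (QuotientGroup.eq_one_iff _).mp h1
  have hmemA : ∀ x ∈ A, ⁅x, g⁆ ∈ A := by
    intro x hx
    have h1 : g * x⁻¹ * g⁻¹ ∈ A := ‹A.Normal›.conj_mem _ (A.inv_mem hx) g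
    have h2 := A.mul_mem hx h1
    simpa [commutatorElement_def, mul_assoc] using h2
  -- the commutator-with-`g` homomorphism
  set f : A →* A := {
    toFun := fun a => ⟨⁅(a : G), g⁆, hmemA a a.2⟩
    map_one' := by
      ext
      simp
    map_mul' := by
      intro a b
      ext
      have hb : ⁅(b : G), g⁆ ∈ A := hmemA b b.2
      have ha' : ⁅(a : G), g⁆ ∈ A := hmemA a a.2
      have h1 : (a : G) * ⁅(b : G), g⁆ = ⁅(b : G), g⁆ * a := hab _ a.2 _ hb
      calc ⁅((a * b : A) : G), g⁆
          = (a : G) * ⁅(b : G), g⁆ * (a : G)⁻¹ * ⁅(a : G), g⁆ := by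
            push_cast; group
        _ = ⁅(b : G), g⁆ * (a : G) * (a : G)⁻¹ * ⁅(a : G), g⁆ := by rw [h1]
        _ = ⁅(b : G), g⁆ * ⁅(a : G), g⁆ := by group
        _ = ⁅(a : G), g⁆ * ⁅(b : G), g⁆ := hab _ hb _ ha' } with hf
  set N : Subgroup G := Subgroup.map A.subtype f.range with hN
  have hNmem : ∀ y : G, y ∈ N ↔ ∃ a ∈ A, ⁅a, g⁆ = y := by
    intro y
    constructor
    · rintro ⟨⟨a, ha⟩, ⟨⟨b, hb⟩, hba⟩, rfl⟩
      refine ⟨b, hb, ?_⟩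
      have := congrArg (Subtype.val) hba
      simpa [hf] using this
    · rintro ⟨a, ha, rfl⟩
      exact ⟨⟨⁅a, g⁆, hmemA a ha⟩, ⟨⟨a, ha⟩, rfl⟩, rfl⟩
  -- `N` is normal
  have hAnorm : ∀ b ∈ A, b ∈ (Subgroup.normalizer N) := by
    intro b hb
    rw [Subgroup.mem_normalizer_iff]
    intro y
    constructor
    · intro hy
      obtain ⟨a, ha, rfl⟩ := (hNmem y).mp hy
      have hc : b * ⁅a, g⁆ = ⁅a, g⁆ * b := hab _ hb _ (hmemA a ha)
      have : b * ⁅a, g⁆ * b⁻¹ = ⁅a, g⁆ := by rw [hc]; group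
      rw [this]
      exact (hNmem _).mpr ⟨a, ha, rfl⟩
    · intro hy
      obtain ⟨a, ha, hay⟩ := (hNmem _).mp hy
      have hc : b * ⁅a, g⁆ = ⁅a, g⁆ * b := hab _ hb _ (hmemA a ha)
      have hyy : y = ⁅a, g⁆ := by
        have : b * y * b⁻¹ * b = ⁅a, g⁆ * b := by rw [hay]
        have h2 : b * y = ⁅a, g⁆ * b := by
          calc b * y = b * y * b⁻¹ * b := by group
            _ = ⁅a, g⁆ * b := this
        calc y = b⁻¹ * (b * y) := by group
          _ = b⁻¹ * (⁅a, g⁆ * b) := by rw [h2]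
          _ = b⁻¹ * (b * ⁅a, g⁆) := by rw [← hc]
          _ = ⁅a, g⁆ := by group
      rw [hyy]
      exact (hNmem _).mpr ⟨a, ha, rfl⟩
  have hgnorm : g ∈ (Subgroup.normalizer N) := by
    rw [Subgroup.mem_normalizer_iff]
    intro y
    constructor
    · intro hy
      obtain ⟨a, ha, rfl⟩ := (hNmem y).mp hy
      have : g * ⁅a, g⁆ * g⁻¹ = ⁅g * a * g⁻¹, g⁆ := by group
      rw [this]
      exact (hNmem _).mpr ⟨g * a * g⁻¹, ‹A.Normal›.conj_mem _ ha g, rfl⟩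
    · intro hy
      obtain ⟨a, ha, hay⟩ := (hNmem _).mp hy
      have hyy : y = ⁅g⁻¹ * a * g, g⁆ := by
        have h0 : y = g⁻¹ * ⁅a, g⁆ * g := by rw [hay]; group
        rw [h0]; group
      rw [hyy]
      refine (hNmem _).mpr ⟨g⁻¹ * a * g, ?_, rfl⟩
      have := ‹A.Normal›.conj_mem _ ha g⁻¹
      simpa using this
  haveI hNnormal : N.Normal := by
    constructor
    intro n hn x
    obtain ⟨a, ha, m, rfl⟩ := hdec x
    have hx : a * g ^ m ∈ (Subgroup.normalizer N) :=
      (Subgroup.normalizer (N : Set G)).mul_mem (hAnorm a ha) ((Subgroup.normalizer (N : Set G)).zpow_mem hgnorm m)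
    exact (Subgroup.mem_normalizer_iff.mp hx n).mp hn
  -- image of `A` is central modulo `N`, hence `G/N` is abelian and `G' ≤ N`
  set π : G →* G ⧸ N := QuotientGroup.mk' N with hπ
  have hacommg : ∀ a ∈ A, Commute (π a) (π g) := by
    intro a ha
    have h1 : π ⁅a, g⁆ = 1 := (QuotientGroup.eq_one_iff _).mpr ((hNmem _).mpr ⟨a, ha, rfl⟩)
    rw [map_commutatorElement] at h1
    exact commutatorElement_eq_one_iff_commute.mp h1
  have hcentral : ∀ a ∈ A, ∀ x : G, Commute (π a) (π x) := by
    intro a ha x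
    obtain ⟨b, hb, n, rfl⟩ := hdec x
    rw [map_mul, map_zpow]
    have cab : Commute a b := hab a ha b hb
    exact Commute.mul_right (cab.map π) ((hacommg a ha).zpow_right n)
  have hcommle : commutator G ≤ N := by
    rw [commutator_def]
    rw [Subgroup.commutator_le]
    intro x _ y _
    refine (QuotientGroup.eq_one_iff _).mp ?_
    show π ⁅x, y⁆ = 1
    rw [map_commutatorElement]
    refine commutatorElement_eq_one_iff_commute.mpr ?_
    obtain ⟨a, ha, m, rfl⟩ := hdec x
    obtain ⟨b, hb, n, rfl⟩ := hdec y
    rw [map_mul, map_zpow, map_mul, map_zpow]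
    refine Commute.mul_left (hcentral a ha _) ?_
    exact Commute.mul_right ((hcentral b hb g).symm.zpow_left m)
      ((Commute.refl (π g)).zpow_zpow m n)
  -- `N` is exactly the commutator subgroup
  have hNcomm : N = commutator G := by
    refine le_antisymm ?_ hcommle
    intro y hy
    obtain ⟨a, ha, rfl⟩ := (hNmem y).mp hy
    rw [commutator_def]
    exact Subgroup.commutator_mem_commutator (Subgroup.mem_top _) (Subgroup.mem_top _)
  -- the kernel corresponds to `A ⊓ Z(G)`
  have hKer : Subgroup.map A.subtype f.ker = A ⊓ Subgroup.center G := by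
    ext y
    constructor
    · rintro ⟨⟨a, ha⟩, hk, rfl⟩
      have h1 : ⁅a, g⁆ = 1 := by
        have := congrArg (Subtype.val) (MonoidHom.mem_ker.mp hk)
        simpa [hf] using this
      have hcg : Commute a g := commutatorElement_eq_one_iff_commute.mp h1
      refine ⟨ha, Subgroup.mem_center_iff.mpr ?_⟩
      intro x
      obtain ⟨b, hb, n, rfl⟩ := hdec x
      have cab : Commute a b := hab a ha b hb
      exact ((Commute.mul_right cab (hcg.zpow_right n)).symm).eq
    · rintro ⟨hyA, hyC⟩
      refine ⟨⟨y, hyA⟩, MonoidHom.mem_ker.mpr ?_, rfl⟩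
      ext
      show ⁅y, g⁆ = 1
      have hc : Commute y g := (Subgroup.mem_center_iff.mp hyC g).symm
      exact commutatorElement_eq_one_iff_commute.mpr hc
  -- cardinality bookkeeping
  have e1 : Nat.card A = Nat.card f.range * Nat.card f.ker := by
    rw [Subgroup.card_eq_card_quotient_mul_card_subgroup f.ker]
    congr 1
    exact Nat.card_congr (QuotientGroup.quotientKerEquivRange f).toEquiv
  have e2 : Nat.card f.range = Nat.card (commutator G) := by
    rw [← hNcomm, hN]
    exact Nat.card_congr (Subgroup.equivMapOfInjective f.range A.subtype
      A.subtype_injective).toEquiv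
  have e3 : Nat.card f.ker = Nat.card (A ⊓ Subgroup.center G : Subgroup G) := by
    rw [← hKer]
    exact Nat.card_congr (Subgroup.equivMapOfInjective f.ker A.subtype
      A.subtype_injective).toEquiv
  rw [e1, e2, e3]
end

section
/- Let G be a finite p-group with p odd and let X be a subgroup of G of order p. Then N_G(X) = C_G(X), and X commutes with every G-conjugate of X provided every subgroup of G has at most p conjugates. -/
/-- Let `G` be a finite `p`-group, `p` odd, of subgroup breadth at most 1, and `X ≤ G`
of order `p`. Then `N_G(X) = C_G(X)` and `X` commutes with each of its conjugates. -/
theorem stmt_13 (p : ℕ) (hp : p.Prime) (hodd : Odd p) (G : Type*) [Group G] [Finite G]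
    (hG : IsPGroup p G)
    (hsbr : ∀ H : Subgroup G, (Subgroup.normalizer (H : Set G)).index ≤ p)
    (X : Subgroup G) (hX : Nat.card X = p) :
    Subgroup.normalizer (X : Set G) = Subgroup.centralizer (X : Set G) ∧
      ∀ g : G, ∀ x ∈ X, ∀ y ∈ X.map (MulAut.conj g).toMonoidHom, Commute x y := by
  have hp' : Fact p.Prime := ⟨hp⟩
  have hXcyc : IsCyclic X := isCyclic_of_prime_card hX
  have hfinAut : Finite (MulAut X) := by infer_instance
  -- Part 1 : normalizer = centralizer
  have h1 : Subgroup.normalizer (X : Set G) = Subgroup.centralizer (X : Set G) := by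
    apply le_antisymm
    · intro g hg
      have key : (⟨g, hg⟩ : Subgroup.normalizer (X : Set G)) ∈ X.normalizerMonoidHom.ker := by
        rw [MonoidHom.mem_ker, ← orderOf_eq_one_iff]
        set a := X.normalizerMonoidHom ⟨g, hg⟩ with ha
        have hd1 : orderOf a ∣ Nat.card (MulAut X) := orderOf_dvd_natCard a
        have hcard : Nat.card (MulAut X) = p - 1 := by
          rw [IsCyclic.card_mulAut, hX, Nat.totient_prime hp]
        obtain ⟨k, hk⟩ := (IsPGroup.iff_orderOf.mp (hG.to_subgroup (Subgroup.normalizer (X : Set G))))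
          (⟨g, hg⟩ : Subgroup.normalizer (X : Set G))
        have hd2 : orderOf a ∣ p ^ k := by
          rw [ha, ← hk]; exact orderOf_map_dvd _ _
        have hp2 : 2 ≤ p := hp.two_le
        have hcop : Nat.Coprime (p ^ k) (p - 1) :=
          Nat.Coprime.pow_left k ((Nat.Prime.coprime_iff_not_dvd hp).mpr
            (Nat.not_dvd_of_pos_of_lt (by omega) (by omega)))
        rw [hcard] at hd1
        exact Nat.eq_one_of_dvd_coprimes hcop hd2 hd1
      rw [Subgroup.normalizerMonoidHom_ker, Subgroup.mem_subgroupOf] at key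
      exact key
    · intro g hg
      rw [Subgroup.mem_normalizer_iff]
      intro x
      constructor
      · intro hx
        have := Subgroup.mem_centralizer_iff.mp hg x hx
        have : g * x * g⁻¹ = x := by rw [← this]; group
        rw [this]; exact hx
      · intro hx
        have h2 := Subgroup.mem_centralizer_iff.mp hg _ hx
        have hxx : x = g * x * g⁻¹ := by
          have h3 := congrArg (fun t => g⁻¹ * t) h2
          simpa [mul_assoc] using h3
        rw [hxx]; exact hx
  -- Part 2
  refine ⟨h1, ?_⟩
  set N := Subgroup.normalizer (X : Set G) with hN
  have hXN : X ≤ N := Subgroup.le_normalizer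
  -- every point of G ⧸ N is fixed under the action of X
  have hPX : IsPGroup p X := hG.to_subgroup X
  have hfix : ∀ q : G ⧸ N, q ∈ MulAction.fixedPoints X (G ⧸ N) := by
    have hmod := hPX.card_modEq_card_fixedPoints (G ⧸ N)
    have hcardq : Nat.card (G ⧸ N) = N.index := N.index_eq_card.symm
    obtain ⟨k, hk⟩ := hG.index N
    have hle : N.index ≤ p := hsbr X
    have hone : (QuotientGroup.mk (1 : G) : G ⧸ N) ∈ MulAction.fixedPoints X (G ⧸ N) := by
      intro x
      show QuotientGroup.mk ((x : G) * 1) = (QuotientGroup.mk (1 : G) : G ⧸ N)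
      rw [QuotientGroup.eq]
      simpa using N.inv_mem (hXN x.2)
    have hpos : 0 < Nat.card (MulAction.fixedPoints X (G ⧸ N)) := by
      have : Nonempty (MulAction.fixedPoints X (G ⧸ N)) := ⟨⟨_, hone⟩⟩
      exact Nat.card_pos
    have hfle : Nat.card (MulAction.fixedPoints X (G ⧸ N)) ≤ Nat.card (G ⧸ N) :=
      Nat.card_le_card_of_injective Subtype.val Subtype.val_injective
    have hk1 : k ≤ 1 := by
      by_contra hk2
      have : p ^ 2 ≤ p ^ k := Nat.pow_le_pow_right hp.pos (by omega)
      have hp2 : 2 ≤ p := hp.two_le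
      nlinarith [hk ▸ hle]
    have heq : MulAction.fixedPoints X (G ⧸ N) = Set.univ := by
      apply Set.eq_of_subset_of_ncard_le (Set.subset_univ _)
      rw [Set.ncard_univ, ← Nat.card_coe_set_eq]
      interval_cases k
      · -- index = 1, card = 1
        have : Nat.card (G ⧸ N) = 1 := by rw [hcardq, hk, pow_zero]
        omega
      · -- index = p
        have hcp : Nat.card (G ⧸ N) = p := by rw [hcardq, hk, pow_one]
        have hdvd : p ∣ Nat.card (MulAction.fixedPoints X (G ⧸ N)) := by
          have := hmod
          rw [hcp] at this
          exact (Nat.modEq_zero_iff_dvd).mp (((Nat.modEq_zero_iff_dvd.mpr dvd_rfl).symm.trans this).symm)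
        rw [hcp]
        exact Nat.le_of_dvd hpos hdvd
    intro q
    rw [heq]
    trivial
  -- conjugates of elements of X normalize (hence centralize) X
  have key : ∀ g : G, ∀ x ∈ X, g * x * g⁻¹ ∈ N := by
    intro g x hx
    have hq := hfix (QuotientGroup.mk g⁻¹) ⟨x⁻¹, X.inv_mem hx⟩
    have hq' : QuotientGroup.mk (x⁻¹ * g⁻¹) = (QuotientGroup.mk g⁻¹ : G ⧸ N) := hq
    have := (QuotientGroup.eq (s := N)).mp hq'
    have h5 : (x⁻¹ * g⁻¹)⁻¹ * g⁻¹ = g * x * g⁻¹ := by group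
    rwa [h5] at this
  intro g x hx y hy
  obtain ⟨x', hx', rfl⟩ := hy
  have hyC : (MulAut.conj g).toMonoidHom x' ∈ Subgroup.centralizer (X : Set G) := by
    rw [← h1]
    have : (MulAut.conj g).toMonoidHom x' = g * x' * g⁻¹ := by
      simp [MulAut.conj_apply]
    rw [this]
    exact key g x' hx'
  exact (Subgroup.mem_centralizer_iff.mp hyC x hx)
end

section
/- The central product of Q8 and D8 (identifying their centers), a group of order 32, has the property that every subgroup has at most 2 conjugates, and its center has index 16. -/
set_option maxRecDepth 10000

open scoped commutatorElement

namespace Stmt17Aux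

abbrev Qg := QuaternionGroup 2
abbrev Dg := DihedralGroup 4
abbrev Pg := Qg × Dg
def zQ : Qg := .a 2
def zD : Dg := .r 2
def pn : Pg := (zQ, zD)
def pu : Pg := (zQ, 1)
def pv : Pg := ((1 : Qg), zD)

lemma dz : zQ ≠ 1 ∧ zQ * zQ = 1 ∧ zD * zD = 1 := by decide
lemma dzQcen : ∀ q : Qg, zQ * q = q * zQ := by decide
lemma dQcen : ∀ q : Qg, (∀ q' : Qg, q * q' = q' * q) → q = 1 ∨ q = zQ := by decide
lemma dDcen : ∀ d : Dg, (∀ d' : Dg, d * d' = d' * d) → d = 1 ∨ d = zD := by decide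
lemma dComm : ∀ p q : Pg, ⁅p,q⁆ = 1 ∨ ⁅p,q⁆ = pn ∨ ⁅p,q⁆ = pu ∨ ⁅p,q⁆ = pv := by decide
lemma dSq : ∀ p : Pg, p * p = 1 ∨ p * p = pn ∨ p * p = pu ∨ p * p = pv := by decide
lemma dCen : ∀ p : Pg, (∀ q : Pg, ⁅p,q⁆ = 1 ∨ ⁅p,q⁆ = pn) → (p = 1 ∨ p = pn ∨ p = pu ∨ p = pv) := by
  decide
lemma dKlein : ∀ p q : Pg, (p*p = 1 ∨ p*p = pn) → (q*q = 1 ∨ q*q = pn) →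
    (⁅p,q⁆ = 1 ∨ ⁅p,q⁆ = pn) →
    ((p = 1 ∨ p = pn) ∨ (q = 1 ∨ q = pn) ∨ (p * q⁻¹ = 1 ∨ p * q⁻¹ = pn) ∨
     (p = pu ∨ p = pv) ∨ (q = pu ∨ q = pv) ∨ (p * q = pu ∨ p * q = pv)) := by decide
lemma dcardP : Nat.card Pg = 64 := by
  rw [Nat.card_eq_fintype_card]
  rfl

end Stmt17Aux

open Stmt17Aux Subgroup

/-- The central product `Q₈ * D₈` (of order 32) has subgroup breadth 1 and center of
index 16. -/
theorem stmt_17 (G : Type*) [Group G] [Finite G] (A B : Subgroup G)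
    (hA : Nonempty (A ≃* QuaternionGroup 2))
    (hB : Nonempty (B ≃* DihedralGroup 4))
    (hcomm : ∀ a ∈ A, ∀ b ∈ B, Commute a b)
    (hgen : A ⊔ B = ⊤)
    (hcard : Nat.card G = 32) :
    (∀ H : Subgroup G, (Subgroup.normalizer (H : Set G)).index ≤ 2) ∧ (Subgroup.center G).index = 16 := by
  classical
  obtain ⟨e⟩ := hA
  obtain ⟨f⟩ := hB
  set eA : Qg →* G := A.subtype.comp e.symm.toMonoidHom with heAdef
  set fB : Dg →* G := B.subtype.comp f.symm.toMonoidHom with hfBdef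
  have heA : ∀ q, eA q ∈ A := fun q => (e.symm q).2
  have hfB : ∀ d, fB d ∈ B := fun d => (f.symm d).2
  have heAinj : Function.Injective eA := A.subtype_injective.comp e.symm.injective
  have hfBinj : Function.Injective fB := B.subtype_injective.comp f.symm.injective
  have hcab : ∀ q d, Commute (eA q) (fB d) := fun q d => hcomm _ (heA q) _ (hfB d)
  set ψ : Pg →* G :=
    { toFun := fun p => eA p.1 * fB p.2
      map_one' := by simp
      map_mul' := fun p q => by
        show eA (p.1 * q.1) * fB (p.2 * q.2) = (eA p.1 * fB p.2) * (eA q.1 * fB q.2)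
        rw [map_mul, map_mul]
        exact (hcab q.1 p.2).mul_mul_mul_comm (eA p.1) (fB q.2) } with hψdef
  have hψ : ∀ p : Pg, ψ p = eA p.1 * fB p.2 := fun p => rfl
  -- surjectivity
  have hsurj : Function.Surjective ψ := by
    rw [← MonoidHom.range_eq_top, eq_top_iff, ← hgen]
    apply sup_le
    · intro a ha
      exact ⟨(e ⟨a, ha⟩, 1), by rw [hψ]; simp [heAdef, hfBdef]⟩
    · intro b hb
      exact ⟨(1, f ⟨b, hb⟩), by rw [hψ]; simp [heAdef, hfBdef]⟩
  set z : G := eA zQ with hzdef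
  have hz1 : z ≠ 1 := fun h => dz.1 (heAinj (by rw [map_one, ← h, hzdef]))
  have hz2 : z * z = 1 := by rw [hzdef, ← map_mul, dz.2.1, map_one]
  have hzinv : z⁻¹ = z := inv_eq_of_mul_eq_one_right hz2
  -- z is central
  have hzA : ∀ a ∈ A, z * a = a * z := by
    intro a ha
    have : eA zQ * eA (e ⟨a, ha⟩) = eA (e ⟨a, ha⟩) * eA zQ := by
      rw [← map_mul, ← map_mul, dzQcen]
    rw [hzdef]; simpa [heAdef] using this
  have hzcen : ∀ w : G, z * w = w * z := by
    have hle : A ⊔ B ≤ Subgroup.centralizer {z} := by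
      apply sup_le
      · intro a ha
        rw [Subgroup.mem_centralizer_iff]
        rintro m rfl
        exact hzA a ha
      · intro b hb
        rw [Subgroup.mem_centralizer_iff]
        rintro m rfl
        exact hcomm z (heA zQ) b hb
    intro w
    have hw : w ∈ Subgroup.centralizer {z} := hle (hgen.symm ▸ Subgroup.mem_top w)
    exact Subgroup.mem_centralizer_iff.mp hw z rfl
  have hzmem : z ∈ Subgroup.center G := Subgroup.mem_center_iff.mpr fun g => (hzcen g).symm
  -- A ∩ B ⊆ {1, z}
  have hAB : ∀ w : G, w ∈ A → w ∈ B → w = 1 ∨ w = z := by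
    intro w hwA hwB
    have hwe : eA (e ⟨w, hwA⟩) = w := by simp [heAdef]
    have hq : ∀ q' : Qg, e ⟨w, hwA⟩ * q' = q' * e ⟨w, hwA⟩ := by
      intro q'
      apply heAinj
      rw [map_mul, map_mul, hwe]
      exact ((hcomm _ (heA q') w hwB)).symm
    rcases dQcen _ hq with h | h
    · left; rw [← hwe, h, map_one]
    · right; rw [← hwe, h]
  -- kernel description, forward direction
  have hfwd : ∀ p : Pg, ψ p = 1 → p = 1 ∨ p = pn := by
    rintro ⟨q, d⟩ hp
    rw [hψ] at hp
    have hqB : eA q = (fB d)⁻¹ := eq_inv_of_mul_eq_one_left hp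
    rcases hAB (eA q) (heA q) (by rw [hqB]; exact B.inv_mem (hfB d)) with h | h
    · left
      have hq1 : q = 1 := heAinj (by rw [h, map_one])
      have hd1 : d = 1 := hfBinj (by
        rw [map_one]
        have := hp
        rw [h, one_mul] at this
        exact this)
      simp [hq1, hd1, Prod.ext_iff]
    · right
      have hqz : q = zQ := heAinj h
      have hdz : fB d = z := by
        have := hp
        rw [h] at this
        have : fB d = z⁻¹ := eq_inv_of_mul_eq_one_right this
        rw [hzinv] at this
        exact this
      have hdc : ∀ d' : Dg, d * d' = d' * d := by
        intro d'
        apply hfBinj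
        rw [map_mul, map_mul, hdz]
        exact hzcen (fB d')
      rcases dDcen d hdc with h1 | h1
      · exact absurd (by rw [← hdz, h1, map_one]) hz1.symm
      · simp [hqz, h1, pn, Prod.ext_iff]
  have hψn : ψ pn = 1 := by
    obtain ⟨p0, hp01, hp0⟩ : ∃ p : Pg, p ≠ 1 ∧ ψ p = 1 := by
      by_contra hc
      push_neg at hc
      have hinj : Function.Injective ψ := by
        intro p q hpq
        by_contra hne
        refine hc (p * q⁻¹) (fun h => hne ?_) (by rw [map_mul, map_inv, hpq, mul_inv_cancel])
        have := congrArg (· * q) h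
        simpa using this
      have := Nat.card_eq_of_bijective ψ ⟨hinj, hsurj⟩
      rw [dcardP, hcard] at this
      omega
    rcases hfwd p0 hp0 with h | h
    · exact absurd h hp01
    · rwa [h] at hp0
  have hψu : ψ pu = z := by
    rw [hψ]
    show eA zQ * fB 1 = z
    rw [map_one, mul_one, hzdef]
  have hψv : ψ pv = z := by
    have h1 : (pu * pv : Pg) = pn := by decide
    have h2 : ψ pu * ψ pv = ψ pn := by rw [← map_mul, h1]
    rw [hψu, hψn] at h2
    have h3 := inv_eq_of_mul_eq_one_right h2
    rw [hzinv] at h3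
    exact h3.symm
  have hmem2 : ∀ p : Pg, (p = 1 ∨ p = pn) → ψ p = 1 := by
    rintro p (rfl | rfl)
    · exact map_one ψ
    · exact hψn
  have hmem4 : ∀ p : Pg, (p = pu ∨ p = pv) → ψ p = z := by
    rintro p (rfl | rfl)
    · exact hψu
    · exact hψv
  -- transfers to G
  have hcommG : ∀ x y : G, ⁅x, y⁆ = 1 ∨ ⁅x, y⁆ = z := by
    intro x y
    obtain ⟨p, rfl⟩ := hsurj x
    obtain ⟨q, rfl⟩ := hsurj y
    rw [← map_commutatorElement]
    rcases dComm p q with h | h | h | h <;> rw [h]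
    · left; exact map_one ψ
    · left; exact hψn
    · right; exact hψu
    · right; exact hψv
  have hsqG : ∀ x : G, x * x = 1 ∨ x * x = z := by
    intro x
    obtain ⟨p, rfl⟩ := hsurj x
    rw [← map_mul]
    rcases dSq p with h | h | h | h <;> rw [h]
    · left; exact map_one ψ
    · left; exact hψn
    · right; exact hψu
    · right; exact hψv
  have hkleinG : ∀ x y : G, x * x = 1 → y * y = 1 → x * y = y * x →
      x = 1 ∨ y = 1 ∨ x = y ∨ x = z ∨ y = z ∨ x * y = z := by
    intro x y hx hy hxy
    obtain ⟨p, rfl⟩ := hsurj x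
    obtain ⟨q, rfl⟩ := hsurj y
    have h1 : p * p = 1 ∨ p * p = pn := hfwd _ (by rw [map_mul]; exact hx)
    have h2 : q * q = 1 ∨ q * q = pn := hfwd _ (by rw [map_mul]; exact hy)
    have h3 : ⁅p, q⁆ = 1 ∨ ⁅p, q⁆ = pn := hfwd _ (by
      rw [map_commutatorElement]
      exact commutatorElement_eq_one_iff_commute.mpr hxy)
    rcases dKlein p q h1 h2 h3 with h | h | h | h | h | h
    · exact Or.inl (hmem2 p h)
    · exact Or.inr (Or.inl (hmem2 q h))
    · refine Or.inr (Or.inr (Or.inl ?_))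
      have := hmem2 _ h
      rw [map_mul, map_inv] at this
      have := congrArg (· * ψ q) this
      simpa using this
    · exact Or.inr (Or.inr (Or.inr (Or.inl (hmem4 p h))))
    · exact Or.inr (Or.inr (Or.inr (Or.inr (Or.inl (hmem4 q h)))))
    · refine Or.inr (Or.inr (Or.inr (Or.inr (Or.inr ?_))))
      have := hmem4 _ h
      rwa [map_mul] at this
  have hcenG : ∀ x : G, x ∈ Subgroup.center G → x = 1 ∨ x = z := by
    intro x hx
    obtain ⟨p, rfl⟩ := hsurj x
    have hp : ∀ q : Pg, ⁅p, q⁆ = 1 ∨ ⁅p, q⁆ = pn := by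
      intro q
      apply hfwd
      rw [map_commutatorElement]
      exact commutatorElement_eq_one_iff_commute.mpr
        ((Subgroup.mem_center_iff.mp hx (ψ q)).symm)
    rcases dCen p hp with h | h | h | h
    · left; rw [h, map_one]
    · left; rw [h, hψn]
    · right; rw [h, hψu]
    · right; rw [h, hψv]
  -- commutator bilinearity
  have hcomc : ∀ x y w : G, ⁅x, y⁆ * w = w * ⁅x, y⁆ := by
    intro x y w
    rcases hcommG x y with h | h <;> rw [h]
    · simp
    · exact hzcen w
  have hsplit : ∀ x y h : G, ⁅x * y, h⁆ = ⁅x, h⁆ * ⁅y, h⁆ := by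
    intro x y h
    have h2 : x * ⁅y, h⁆ = ⁅y, h⁆ * x := (hcomc y h x).symm
    calc ⁅x * y, h⁆ = x * (y * h * y⁻¹ * h⁻¹) * h * x⁻¹ * h⁻¹ := by group
      _ = x * ⁅y, h⁆ * h * x⁻¹ * h⁻¹ := by rw [← commutatorElement_def]
      _ = ⁅y, h⁆ * (x * h * x⁻¹ * h⁻¹) := by rw [h2]; group
      _ = ⁅y, h⁆ * ⁅x, h⁆ := by rw [← commutatorElement_def]
      _ = ⁅x, h⁆ * ⁅y, h⁆ := (hcomc x h _).symm
  constructor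
  · -- breadth part
    intro H
    by_cases hzH : z ∈ H
    · have hnt : (Subgroup.normalizer (H : Set G)) = ⊤ := by
        rw [eq_top_iff']
        intro g
        rw [Subgroup.mem_normalizer_iff]
        intro h
        have hgh : g * h * g⁻¹ = ⁅g, h⁆ * h := by group
        constructor
        · intro hh
          rw [hgh]
          rcases hcommG g h with hc | hc <;> rw [hc]
          · simpa using hh
          · exact H.mul_mem hzH hh
        · intro hh
          have hh' : h = ⁅g, h⁆⁻¹ * (g * h * g⁻¹) := by group
          rw [hh']
          rcases hcommG g h with hc | hc <;> rw [hc]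
          · simpa using hh
          · exact H.mul_mem (H.inv_mem hzH) hh
      rw [hnt, Subgroup.index_top]
      omega
    · have hpair : ∀ h1 ∈ H, ∀ h2 ∈ H, h1 = 1 ∨ h2 = 1 ∨ h1 = h2 := by
        intro h1 hh1 h2 hh2
        have hs1 : h1 * h1 = 1 := by
          rcases hsqG h1 with h | h
          · exact h
          · exact absurd (h ▸ H.mul_mem hh1 hh1) hzH
        have hs2 : h2 * h2 = 1 := by
          rcases hsqG h2 with h | h
          · exact h
          · exact absurd (h ▸ H.mul_mem hh2 hh2) hzH
        have hcm : h1 * h2 = h2 * h1 := by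
          rcases hcommG h1 h2 with h | h
          · exact commutatorElement_eq_one_iff_commute.mp h
          · exfalso
            apply hzH
            rw [← h, commutatorElement_def]
            exact H.mul_mem (H.mul_mem (H.mul_mem hh1 hh2) (H.inv_mem hh1)) (H.inv_mem hh2)
        rcases hkleinG h1 h2 hs1 hs2 hcm with h | h | h | h | h | h
        · exact Or.inl h
        · exact Or.inr (Or.inl h)
        · exact Or.inr (Or.inr h)
        · exact absurd (h ▸ hh1) hzH
        · exact absurd (h ▸ hh2) hzH
        · exact absurd (h ▸ H.mul_mem hh1 hh2) hzH
      by_cases hex : ∃ h ∈ H, h ≠ 1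
      · obtain ⟨h0, hh0, hh01⟩ := hex
        have hH2 : ∀ h ∈ H, h = 1 ∨ h = h0 := by
          intro h hh
          rcases hpair h hh h0 hh0 with h' | h' | h'
          · exact Or.inl h'
          · exact absurd h' hh01
          · exact Or.inr h'
        -- the homomorphism g ↦ [g, h0]
        set w : Multiplicative (ZMod 2) := Multiplicative.ofAdd 1 with hwdef
        have hw1 : w ≠ 1 := by decide
        have hww : w * w = 1 := by decide
        set χ : G →* Multiplicative (ZMod 2) :=
          { toFun := fun g => if ⁅g, h0⁆ = 1 then 1 else w
            map_one' := by
              have h1 : ⁅(1 : G), h0⁆ = 1 := by rw [commutatorElement_def]; group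
              show (if ⁅(1 : G), h0⁆ = 1 then 1 else w) = 1
              rw [if_pos h1]
            map_mul' := fun x y => by
              show (if ⁅x * y, h0⁆ = 1 then 1 else w) =
                (if ⁅x, h0⁆ = 1 then 1 else w) * (if ⁅y, h0⁆ = 1 then 1 else w)
              rw [hsplit]
              rcases hcommG x h0 with hx | hx <;> rcases hcommG y h0 with hy | hy <;>
                rw [hx, hy]
              · simp
              · simp [hz1]
              · simp [hz1]
              · rw [if_neg hz1, if_pos hz2, hww] } with hχdef
        have hker : χ.ker ≤ (Subgroup.normalizer (H : Set G)) := by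
          intro g hg
          have hg1 : ⁅g, h0⁆ = 1 := by
            by_contra hne
            have : χ g = w := by rw [hχdef]; exact if_neg hne
            rw [MonoidHom.mem_ker] at hg
            rw [hg] at this
            exact hw1 this.symm
          have hconj : g * h0 * g⁻¹ = h0 := by
            have hc : g * h0 = h0 * g := commutatorElement_eq_one_iff_commute.mp hg1
            rw [hc]
            simp
          rw [Subgroup.mem_normalizer_iff]
          intro h
          constructor
          · intro hh
            rcases hH2 h hh with rfl | rfl
            · simpa using H.one_mem
            · rw [hconj]; exact hh0
          · intro hh
            rcases hH2 _ hh with h' | h'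
            · have : h = 1 := by
                have := congrArg (fun t => g⁻¹ * t * g) h'
                simpa [mul_assoc] using this
              rw [this]; exact H.one_mem
            · have : h = h0 := by
                rw [← hconj] at h'
                have := congrArg (fun t => g⁻¹ * t * g) h'
                simpa [mul_assoc] using this
              rw [this]; exact hh0
        have hdvd : (Subgroup.normalizer (H : Set G)).index ∣ χ.ker.index := Subgroup.index_dvd_of_le hker
        have hkerind : χ.ker.index ≤ 2 := by
          rw [Subgroup.index_ker]
          have h1 : Nat.card χ.range ≤ Nat.card (Multiplicative (ZMod 2)) :=
            Nat.card_le_card_of_injective _ (Subtype.val_injective)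
          have h2 : Nat.card (Multiplicative (ZMod 2)) = 2 := by
            rw [Nat.card_eq_fintype_card]; rfl
          omega
        have hpos : 0 < χ.ker.index := Nat.pos_of_ne_zero Subgroup.index_ne_zero_of_finite
        calc (Subgroup.normalizer (H : Set G)).index ≤ χ.ker.index := Nat.le_of_dvd hpos hdvd
          _ ≤ 2 := hkerind
      · push_neg at hex
        have hnt : (Subgroup.normalizer (H : Set G)) = ⊤ := by
          rw [eq_top_iff']
          intro g
          rw [Subgroup.mem_normalizer_iff]
          intro h
          constructor
          · intro hh
            rw [hex h hh]
            simpa using H.one_mem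
          · intro hh
            have := hex _ hh
            have hh1 : h = 1 := by
              have := congrArg (fun t => g⁻¹ * t * g) this
              simpa [mul_assoc] using this
            rw [hh1]; exact H.one_mem
        rw [hnt, Subgroup.index_top]
        omega
  · -- center index
    have hcset : ∀ x : G, x ∈ Subgroup.center G ↔ x ∈ ({1, z} : Set G) := by
      intro x
      constructor
      · intro hx
        rcases hcenG x hx with h | h
        · exact Or.inl h
        · exact Or.inr h
      · rintro (rfl | rfl)
        · exact Subgroup.one_mem _
        · exact hzmem
    have hcard2 : Nat.card (Subgroup.center G) = 2 := by
      have h1 : Nat.card (Subgroup.center G) = Nat.card ({1, z} : Set G) :=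
        Nat.card_congr (Equiv.subtypeEquivRight hcset)
      rw [h1, Nat.card_coe_set_eq, Set.ncard_pair (fun h => hz1 h.symm)]
    have := Subgroup.card_mul_index (Subgroup.center G)
    rw [hcard2, hcard] at this
    omega
end
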